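/- arXiv:0910.0237 — 2 statements merged into one kernel-verified Lean document; each statement's English description precedes it below -/
import Mathlib

section
/- Let (Y,f) be an almost Smale system: (X,g) a transitive Smale space and θ : X → Y a factor map that is one-to-one almost everywhere, u-resolving, and s-resolving. If (X', g') is an irreducible Smale space and φ : X' → Y a factor map, then φ factors through θ: there exists a factor map ρ : X' → X with φ = θ ∘ ρ. -/
set_option linter.unusedSectionVars false


open Filter Topology Set

/-- `f` is expansive with expansive constant `c`. -/
def Expansive {X : Type*} [MetricSpace X] (f : Equiv.Perm X) (c : ℝ) : Prop :=
  ∀ p q : X, p ≠ q → ∃ n : ℤ, c < dist ((f ^ n) p) ((f ^ n) q)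

/-- The ε-stable set of `x`. -/
def Ws {X : Type*} [MetricSpace X] (f : Equiv.Perm X) (ε : ℝ) (x : X) : Set X :=
  {y | ∀ n : ℕ, dist ((f ^ (n : ℤ)) x) ((f ^ (n : ℤ)) y) < ε}

/-- The ε-unstable set of `x`. -/
def Wu {X : Type*} [MetricSpace X] (f : Equiv.Perm X) (ε : ℝ) (x : X) : Set X :=
  {y | ∀ n : ℕ, dist ((f ^ (-(n : ℤ))) x) ((f ^ (-(n : ℤ))) y) < ε}

/-- The stable set of `x`. -/
def stableSet {X : Type*} [MetricSpace X] (f : Equiv.Perm X) (x : X) : Set X :=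
  {y | Filter.Tendsto (fun n : ℕ => dist ((f ^ (n : ℤ)) x) ((f ^ (n : ℤ)) y))
    Filter.atTop (nhds 0)}

/-- The unstable set of `x`. -/
def unstableSet {X : Type*} [MetricSpace X] (f : Equiv.Perm X) (x : X) : Set X :=
  {y | Filter.Tendsto (fun n : ℕ => dist ((f ^ (-(n : ℤ))) x) ((f ^ (-(n : ℤ))) y))
    Filter.atTop (nhds 0)}

/-- Canonical coordinates: for all sufficiently small ε > 0 there is δ > 0 such that
points at distance < δ have a unique bracket `[x,y] = W^s_ε(x) ∩ W^u_ε(y)`. -/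
def CanonicalCoords {X : Type*} [MetricSpace X] (f : Equiv.Perm X) : Prop :=
  ∃ ε₀ > 0, ∀ ε : ℝ, 0 < ε → ε ≤ ε₀ → ∃ δ > 0, ∀ x y : X, dist x y < δ →
    ∃! z, z ∈ Ws f ε x ∩ Wu f ε y

/-- A Smale space: an expansive homeomorphism with canonical coordinates. -/
def IsSmale {X : Type*} [MetricSpace X] (f : Equiv.Perm X) : Prop :=
  Continuous (⇑f) ∧ Continuous (⇑f.symm) ∧ (∃ c > 0, Expansive f c) ∧ CanonicalCoords f

/-- Topological transitivity. -/
def TopTransitive {X : Type*} [MetricSpace X] (f : Equiv.Perm X) : Prop :=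
  ∀ U V : Set X, IsOpen U → IsOpen V → U.Nonempty → V.Nonempty →
    ∃ n : ℕ, ((f ^ (n : ℤ)) ⁻¹' U ∩ V).Nonempty

/-- A periodic point of `f`. -/
def IsPeriodicPoint {X : Type*} [MetricSpace X] (f : Equiv.Perm X) (p : X) : Prop :=
  ∃ N : ℕ, 0 < N ∧ (f ^ (N : ℤ)) p = p

/-- A factor map (surjective continuous semiconjugacy). -/
def IsFactorMap {X Y : Type*} [MetricSpace X] [MetricSpace Y]
    (F : Equiv.Perm X) (f : Equiv.Perm Y) (π : X → Y) : Prop :=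
  Continuous π ∧ Function.Surjective π ∧ ∀ x, π (F x) = f (π x)

/-- A map is u-resolving if it is injective on unstable sets. -/
def UResolving {X Y : Type*} [MetricSpace X] (F : Equiv.Perm X) (π : X → Y) : Prop :=
  ∀ x : X, Set.InjOn π (unstableSet F x)

/-- A map is s-resolving if it is injective on stable sets. -/
def SResolving {X Y : Type*} [MetricSpace X] (F : Equiv.Perm X) (π : X → Y) : Prop :=
  ∀ x : X, Set.InjOn π (stableSet F x)

section Helpers

variable {X : Type*} [MetricSpace X]

lemma AS_inv_zpow_apply (g : Equiv.Perm X) (n : ℤ) (x : X) :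
    ((g⁻¹) ^ n) x = (g ^ (-n)) x := by
  rw [inv_zpow, ← zpow_neg]

lemma AS_zpow_apply_add (g : Equiv.Perm X) (m n : ℤ) (x : X) :
    (g ^ (m + n)) x = (g ^ m) ((g ^ n) x) := by
  rw [zpow_add, Equiv.Perm.coe_mul, Function.comp_apply]

lemma AS_zpow_apply_succ (g : Equiv.Perm X) (n : ℤ) (x : X) :
    (g ^ (n + 1)) x = g ((g ^ n) x) := by
  rw [add_comm, AS_zpow_apply_add, zpow_one]

lemma AS_zpow_apply_pred (g : Equiv.Perm X) (n : ℤ) (x : X) :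
    (g ^ (n - 1)) x = g.symm ((g ^ n) x) := by
  have : (g ^ n) x = g ((g ^ (n - 1)) x) := by
    rw [← AS_zpow_apply_succ, sub_add_cancel]
  rw [this, Equiv.symm_apply_apply]

lemma AS_cont_pow (g : Equiv.Perm X) (h1 : Continuous (⇑g)) :
    ∀ n : ℕ, Continuous ⇑(g ^ n) := by
  intro n
  induction n with
  | zero => simpa using continuous_id
  | succ k ih =>
      have : (g ^ (k + 1) : Equiv.Perm X) = g ^ k * g := by rw [pow_succ]
      rw [this, Equiv.Perm.coe_mul]
      exact ih.comp h1

lemma AS_cont_zpow (g : Equiv.Perm X) (h1 : Continuous (⇑g)) (h2 : Continuous (⇑g.symm)) :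
    ∀ n : ℤ, Continuous ⇑(g ^ n) := by
  intro n
  have h2' : Continuous ⇑(g⁻¹) := by rw [Equiv.Perm.inv_def]; exact h2
  cases n with
  | ofNat m => rw [Int.ofNat_eq_coe, zpow_natCast]; exact AS_cont_pow g h1 m
  | negSucc m =>
      rw [zpow_negSucc, ← inv_pow]
      exact AS_cont_pow g⁻¹ h2' (m + 1)

lemma AS_equivar_nat {Y : Type*} [MetricSpace Y] (F : Equiv.Perm X) (f : Equiv.Perm Y)
    (π : X → Y) (h : ∀ x, π (F x) = f (π x)) :
    ∀ (n : ℕ) (x : X), π ((F ^ n) x) = (f ^ n) (π x) := by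
  intro n
  induction n with
  | zero => simp
  | succ k ih =>
      intro x
      have hF : (F ^ (k + 1) : Equiv.Perm X) = F ^ k * F := by rw [pow_succ]
      have hf : (f ^ (k + 1) : Equiv.Perm Y) = f ^ k * f := by rw [pow_succ]
      rw [hF, hf, Equiv.Perm.coe_mul, Equiv.Perm.coe_mul, Function.comp_apply,
        Function.comp_apply, ih (F x), h x]

lemma AS_equivar_zpow {Y : Type*} [MetricSpace Y] (F : Equiv.Perm X) (f : Equiv.Perm Y)
    (π : X → Y) (h : ∀ x, π (F x) = f (π x)) :
    ∀ (n : ℤ) (x : X), π ((F ^ n) x) = (f ^ n) (π x) := by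
  have hinv : ∀ x, π (F⁻¹ x) = f⁻¹ (π x) := by
    intro x
    apply f.injective
    have : π (F (F⁻¹ x)) = f (π (F⁻¹ x)) := h _
    simpa using this.symm
  intro n
  cases n with
  | ofNat m =>
      intro x
      rw [Int.ofNat_eq_coe, zpow_natCast, zpow_natCast]
      exact AS_equivar_nat F f π h m x
  | negSucc m =>
      intro x
      rw [zpow_negSucc, zpow_negSucc, ← inv_pow, ← inv_pow]
      exact AS_equivar_nat F⁻¹ f⁻¹ π hinv (m + 1) x

lemma AS_expansive_eq {Y : Type*} [MetricSpace Y] (f : Equiv.Perm Y) {c : ℝ}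
    (hc : Expansive f c) {p q : Y} (h : ∀ n : ℤ, dist ((f ^ n) p) ((f ^ n) q) ≤ c) :
    p = q := by
  by_contra hne
  obtain ⟨n, hn⟩ := hc p q hne
  exact absurd (h n) (not_le.mpr hn)

lemma AS_expansive_inv (g : Equiv.Perm X) {c : ℝ} (he : Expansive g c) :
    Expansive g⁻¹ c := by
  intro p q hne
  obtain ⟨n, hn⟩ := he p q hne
  refine ⟨-n, ?_⟩
  rw [AS_inv_zpow_apply, AS_inv_zpow_apply, neg_neg]
  exact hn

/-- Forward boundedness at scale ≤ c implies forward asymptoticity. -/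
lemma AS_forward_tendsto [CompactSpace X] (g : Equiv.Perm X)
    (h1 : Continuous (⇑g)) (h2 : Continuous (⇑g.symm)) {c : ℝ}
    (he : Expansive g c)
    {x y : X} (h : ∀ n : ℕ, dist ((g ^ (n : ℤ)) x) ((g ^ (n : ℤ)) y) ≤ c) :
    Tendsto (fun n : ℕ => dist ((g ^ (n : ℤ)) x) ((g ^ (n : ℤ)) y)) atTop (nhds 0) := by
  by_contra hcon
  rw [Metric.tendsto_atTop] at hcon
  push_neg at hcon
  obtain ⟨ε₀, hε₀, hfreq⟩ := hcon
  have hfreq' : ∃ᶠ n : ℕ in atTop, ε₀ ≤ dist ((g ^ (n : ℤ)) x) ((g ^ (n : ℤ)) y) := by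
    rw [frequently_atTop]
    intro N
    obtain ⟨n, hnN, hn⟩ := hfreq N
    refine ⟨n, hnN, ?_⟩
    rw [Real.dist_eq, sub_zero, abs_of_nonneg dist_nonneg] at hn
    exact hn
  obtain ⟨ψ, hψmono, hψ⟩ := extraction_of_frequently_atTop hfreq'
  set w : ℕ → X × X := fun k => ((g ^ (ψ k : ℤ)) x, (g ^ (ψ k : ℤ)) y) with hw
  obtain ⟨⟨p, q⟩, -, ψ₂, hψ₂mono, hlim⟩ :=
    isCompact_univ.tendsto_subseq (x := w) (fun k => mem_univ _)
  have hlp : Tendsto (fun k => (w (ψ₂ k)).1) atTop (nhds p) :=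
    (continuous_fst.tendsto _).comp hlim
  have hlq : Tendsto (fun k => (w (ψ₂ k)).2) atTop (nhds q) :=
    (continuous_snd.tendsto _).comp hlim
  have hpqsep : ε₀ ≤ dist p q := by
    have : Tendsto (fun k => dist (w (ψ₂ k)).1 (w (ψ₂ k)).2) atTop (nhds (dist p q)) :=
      hlp.dist hlq
    exact ge_of_tendsto this (Eventually.of_forall fun k => hψ (ψ₂ k))
  have hbdd : ∀ m : ℤ, dist ((g ^ m) p) ((g ^ m) q) ≤ c := by
    intro m
    have hcm := AS_cont_zpow g h1 h2 m
    have hlp' : Tendsto (fun k => (g ^ m) (w (ψ₂ k)).1) atTop (nhds ((g ^ m) p)) :=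
      (hcm.tendsto _).comp hlp
    have hlq' : Tendsto (fun k => (g ^ m) (w (ψ₂ k)).2) atTop (nhds ((g ^ m) q)) :=
      (hcm.tendsto _).comp hlq
    have hdist : Tendsto (fun k => dist ((g ^ m) (w (ψ₂ k)).1) ((g ^ m) (w (ψ₂ k)).2))
        atTop (nhds (dist ((g ^ m) p) ((g ^ m) q))) := hlp'.dist hlq'
    refine le_of_tendsto hdist ?_
    have hev : ∀ᶠ k in atTop, 0 ≤ m + (ψ (ψ₂ k) : ℤ) := by
      filter_upwards [eventually_ge_atTop (-m).toNat] with k hk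
      have h1' : (k : ℤ) ≤ (ψ (ψ₂ k) : ℤ) := by
        exact_mod_cast le_trans (hψ₂mono.le_apply) (hψmono.le_apply)
      have h2' : ((-m).toNat : ℤ) ≤ (k : ℤ) := by exact_mod_cast hk
      have h3' : -m ≤ ((-m).toNat : ℤ) := Int.self_le_toNat (-m)
      linarith
    filter_upwards [hev] with k hk
    have heq1 : (g ^ m) (w (ψ₂ k)).1 = (g ^ (m + (ψ (ψ₂ k) : ℤ))) x := by
      rw [hw]; exact (AS_zpow_apply_add g m _ x).symm
    have heq2 : (g ^ m) (w (ψ₂ k)).2 = (g ^ (m + (ψ (ψ₂ k) : ℤ))) y := by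
      rw [hw]; exact (AS_zpow_apply_add g m _ y).symm
    rw [heq1, heq2]
    set nn := (m + (ψ (ψ₂ k) : ℤ)).toNat with hnn
    have hcast : (nn : ℤ) = m + (ψ (ψ₂ k) : ℤ) := Int.toNat_of_nonneg hk
    rw [← hcast]
    exact h nn
  have : p = q := AS_expansive_eq g he hbdd
  rw [this, dist_self] at hpqsep
  linarith

lemma AS_Ws_subset_stable [CompactSpace X] (g : Equiv.Perm X)
    (h1 : Continuous (⇑g)) (h2 : Continuous (⇑g.symm)) {c : ℝ}
    (he : Expansive g c) {ε : ℝ} (hεc : ε ≤ c) {x z : X} (hz : z ∈ Ws g ε x) :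
    z ∈ stableSet g x :=
  AS_forward_tendsto g h1 h2 he (fun n => le_trans (hz n).le hεc)

lemma AS_backward_tendsto [CompactSpace X] (g : Equiv.Perm X)
    (h1 : Continuous (⇑g)) (h2 : Continuous (⇑g.symm)) {c : ℝ}
    (he : Expansive g c)
    {x y : X} (h : ∀ n : ℕ, dist ((g ^ (-(n : ℤ))) x) ((g ^ (-(n : ℤ))) y) ≤ c) :
    Tendsto (fun n : ℕ => dist ((g ^ (-(n : ℤ))) x) ((g ^ (-(n : ℤ))) y)) atTop (nhds 0) := by
  have h2' : Continuous ⇑(g⁻¹) := by rw [Equiv.Perm.inv_def]; exact h2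
  have h1' : Continuous ⇑((g⁻¹).symm) := by
    rw [← Equiv.Perm.inv_def, inv_inv]; exact h1
  have key := AS_forward_tendsto (g⁻¹) h2' h1' (AS_expansive_inv g he)
    (x := x) (y := y) (by
      intro n
      rw [AS_inv_zpow_apply, AS_inv_zpow_apply]
      exact h n)
  simpa only [AS_inv_zpow_apply] using key

lemma AS_Wu_subset_unstable [CompactSpace X] (g : Equiv.Perm X)
    (h1 : Continuous (⇑g)) (h2 : Continuous (⇑g.symm)) {c : ℝ}
    (he : Expansive g c) {ε : ℝ} (hεc : ε ≤ c) {x z : X} (hz : z ∈ Wu g ε x) :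
    z ∈ unstableSet g x :=
  AS_backward_tendsto g h1 h2 he (fun n => le_trans (hz n).le hεc)

lemma AS_self_stable (g : Equiv.Perm X) (x : X) : x ∈ stableSet g x := by
  have : (fun n : ℕ => dist ((g ^ (n : ℤ)) x) ((g ^ (n : ℤ)) x)) = fun _ => (0 : ℝ) := by
    funext n; rw [dist_self]
  unfold stableSet
  rw [mem_setOf_eq, this]
  exact tendsto_const_nhds

lemma AS_self_unstable (g : Equiv.Perm X) (x : X) : x ∈ unstableSet g x := by
  have : (fun n : ℕ => dist ((g ^ (-(n : ℤ))) x) ((g ^ (-(n : ℤ))) x)) = fun _ => (0 : ℝ) := by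
    funext n; rw [dist_self]
  unfold unstableSet
  rw [mem_setOf_eq, this]
  exact tendsto_const_nhds

end Helpers
section FiberSep

/-- Fibers of a bi-resolving factor map from a Smale space to an expansive system
are uniformly separated. -/
lemma AS_fiber_sep {X Y : Type*} [MetricSpace X] [CompactSpace X] [MetricSpace Y]
    (g : Equiv.Perm X) (f : Equiv.Perm Y) (θ : X → Y)
    (hg1 : Continuous (⇑g)) (hg2 : Continuous (⇑g.symm))
    {cX cY : ℝ} (hcX : 0 < cX) (heg : Expansive g cX) (hcY : 0 < cY) (hef : Expansive f cY)
    (hcc : CanonicalCoords g)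
    (hθc : Continuous θ) (hsemi : ∀ x, θ (g x) = f (θ x))
    (hθu : UResolving g θ) (hθs : SResolving g θ) :
    ∃ δ₀ > 0, ∀ x y : X, θ x = θ y → dist x y < δ₀ → x = y := by
  obtain ⟨ε₀, hε₀, hccε⟩ := hcc
  have hθuc := CompactSpace.uniformContinuous_of_continuous hθc
  rw [Metric.uniformContinuous_iff] at hθuc
  obtain ⟨δc, hδc, hθcY⟩ := hθuc cY hcY
  set ε : ℝ := min ε₀ (min cX δc) with hεdef
  have hεpos : 0 < ε := lt_min hε₀ (lt_min hcX hδc)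
  have hεε₀ : ε ≤ ε₀ := min_le_left _ _
  have hεcX : ε ≤ cX := le_trans (min_le_right _ _) (min_le_left _ _)
  have hεδc : ε ≤ δc := le_trans (min_le_right _ _) (min_le_right _ _)
  obtain ⟨δ₀, hδ₀, hbr⟩ := hccε ε hεpos hεε₀
  refine ⟨δ₀, hδ₀, ?_⟩
  intro x y hxy hd
  obtain ⟨z, ⟨hzs, hzu⟩, -⟩ := hbr x y hd
  have hθeqz : ∀ n : ℤ, θ ((g ^ n) x) = (f ^ n) (θ x) := fun n => AS_equivar_zpow g f θ hsemi n x
  have himg : ∀ n : ℤ, dist ((f ^ n) (θ x)) ((f ^ n) (θ z)) ≤ cY := by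
    intro n
    rcases le_or_gt 0 n with hn | hn
    · have hnn : ((n.toNat : ℕ) : ℤ) = n := Int.toNat_of_nonneg hn
      have hzs' := hzs n.toNat
      rw [hnn] at hzs'
      have : dist (θ ((g ^ n) x)) (θ ((g ^ n) z)) < cY :=
        hθcY (lt_of_lt_of_le hzs' hεδc)
      rw [AS_equivar_zpow g f θ hsemi n x, AS_equivar_zpow g f θ hsemi n z] at this
      exact this.le
    · set m := (-n).toNat with hm
      have hmn : -((m : ℕ) : ℤ) = n := by
        rw [hm, Int.toNat_of_nonneg (by omega)]; ring
      have hzu' := hzu m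
      rw [hmn] at hzu'
      have : dist (θ ((g ^ n) y)) (θ ((g ^ n) z)) < cY :=
        hθcY (lt_of_lt_of_le hzu' hεδc)
      rw [AS_equivar_zpow g f θ hsemi n y, AS_equivar_zpow g f θ hsemi n z, ← hxy] at this
      exact this.le
  have hθzx : θ x = θ z := AS_expansive_eq f hef himg
  have hzst : z ∈ stableSet g x := AS_Ws_subset_stable g hg1 hg2 heg hεcX hzs
  have hzx : z = x := hθs x hzst (AS_self_stable g x) hθzx.symm
  have hzun : z ∈ unstableSet g y := AS_Wu_subset_unstable g hg1 hg2 heg hεcX hzu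
  have hθzy : θ z = θ y := by rw [← hθzx, hxy]
  have hzy : z = y := hθu y hzun (AS_self_unstable g y) hθzy
  rw [← hzx, hzy]

end FiberSep
section MoreLemmas

lemma AS_one_div_succ_le {ψ : ℕ → ℕ} (hψ : StrictMono ψ) (k : ℕ) :
    1 / ((ψ k : ℝ) + 1) ≤ 1 / ((k : ℝ) + 1) := by
  have hk : k ≤ ψ k := hψ.le_apply
  have : (k : ℝ) + 1 ≤ (ψ k : ℝ) + 1 := by
    have : (k : ℝ) ≤ (ψ k : ℝ) := by exact_mod_cast hk
    linarith
  exact one_div_le_one_div_of_le (by positivity) this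

lemma AS_window {X' : Type*} [MetricSpace X'] (g' : Equiv.Perm X')
    (h1 : Continuous (⇑g')) (h2 : Continuous (⇑g'.symm)) (x' : X') (W : ℕ) {τ : ℝ}
    (hτ : 0 < τ) :
    ∃ r > 0, ∀ y', dist y' x' < r → ∀ n : ℤ, n.natAbs ≤ W →
      dist ((g' ^ n) y') ((g' ^ n) x') ≤ τ := by
  induction W with
  | zero =>
      refine ⟨τ, hτ, ?_⟩
      intro y' hy' n hn
      have : n = 0 := by omega
      rw [this]
      simpa using hy'.le
  | succ W ih =>
      obtain ⟨r₀, hr₀, hwin₀⟩ := ih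
      have hc1 := Metric.continuous_iff.mp (AS_cont_zpow g' h1 h2 ((W : ℤ) + 1)) x' τ hτ
      have hc2 := Metric.continuous_iff.mp (AS_cont_zpow g' h1 h2 (-((W : ℤ) + 1))) x' τ hτ
      obtain ⟨r₁, hr₁, hwin₁⟩ := hc1
      obtain ⟨r₂, hr₂, hwin₂⟩ := hc2
      refine ⟨min r₀ (min r₁ r₂), lt_min hr₀ (lt_min hr₁ hr₂), ?_⟩
      intro y' hy' n hn
      rcases le_or_gt n.natAbs W with hle | hgt
      · exact hwin₀ y' (lt_of_lt_of_le hy' (by simp)) n hle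
      · have : n = (W : ℤ) + 1 ∨ n = -((W : ℤ) + 1) := by omega
        rcases this with h | h
        · rw [h]
          exact (hwin₁ y' (lt_of_lt_of_le hy' (le_trans (min_le_right _ _) (min_le_left _ _)))).le
        · rw [h]
          exact (hwin₂ y' (lt_of_lt_of_le hy' (le_trans (min_le_right _ _) (min_le_right _ _)))).le

lemma AS_lemD {X Y : Type*} [MetricSpace X] [CompactSpace X] [MetricSpace Y]
    (θ : X → Y) (hθc : Continuous θ) {δ₀ γ : ℝ} (hγ : 0 < γ) (hδ₀ : 0 < δ₀)
    (hsep : ∀ x y : X, θ x = θ y → dist x y < δ₀ → x = y) :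
    ∃ η > 0, ∀ a b : X, dist a b ≤ δ₀ / 2 → dist (θ a) (θ b) ≤ η → dist a b ≤ γ := by
  by_contra hcon
  push_neg at hcon
  have h' : ∀ k : ℕ, ∃ a b : X, dist a b ≤ δ₀ / 2 ∧ dist (θ a) (θ b) ≤ 1 / ((k : ℝ) + 1) ∧
      γ < dist a b := by
    intro k
    obtain ⟨a, b, h1, h2, h3⟩ := hcon (1 / ((k : ℝ) + 1)) (by positivity)
    exact ⟨a, b, h1, h2, h3⟩
  choose a b h1 h2 h3 using h'
  set w : ℕ → X × X := fun k => (a k, b k) with hw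
  obtain ⟨⟨A, B⟩, -, ψ, hψmono, hlim⟩ :=
    isCompact_univ.tendsto_subseq (x := w) (fun k => mem_univ _)
  have hlA : Tendsto (fun k => a (ψ k)) atTop (nhds A) := (continuous_fst.tendsto _).comp hlim
  have hlB : Tendsto (fun k => b (ψ k)) atTop (nhds B) := (continuous_snd.tendsto _).comp hlim
  have hdAB : Tendsto (fun k => dist (a (ψ k)) (b (ψ k))) atTop (nhds (dist A B)) :=
    hlA.dist hlB
  have hγAB : γ ≤ dist A B := ge_of_tendsto hdAB (Eventually.of_forall fun k => (h3 (ψ k)).le)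
  have hδAB : dist A B ≤ δ₀ / 2 := le_of_tendsto hdAB (Eventually.of_forall fun k => h1 (ψ k))
  have hθAB : θ A = θ B := by
    have ht1 : Tendsto (fun k => dist (θ (a (ψ k))) (θ (b (ψ k)))) atTop
        (nhds (dist (θ A) (θ B))) := ((hθc.tendsto _).comp hlA).dist ((hθc.tendsto _).comp hlB)
    have ht2 : Tendsto (fun k => dist (θ (a (ψ k))) (θ (b (ψ k)))) atTop (nhds 0) := by
      apply squeeze_zero (fun k => dist_nonneg)
      · intro k
        exact le_trans (h2 (ψ k)) (AS_one_div_succ_le hψmono k)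
      · exact tendsto_one_div_add_atTop_nhds_zero_nat
    have := tendsto_nhds_unique ht1 ht2
    exact dist_le_zero.mp this.le
  have : A = B := hsep A B hθAB (by linarith)
  rw [this, dist_self] at hγAB
  linarith

lemma AS_lemF {X Y : Type*} [MetricSpace X] [CompactSpace X] [MetricSpace Y]
    (θ : X → Y) (hθc : Continuous θ) (A : Set Y) {s γ : ℝ} (hs : 0 < s) (hγ : 0 < γ)
    (huniq : ∀ y : Y, y ∉ A → ∀ a b : X, θ a = y → θ b = y → a = b) :
    ∃ η > 0, ∀ p b : X, s ≤ Metric.infDist (θ p) A → dist (θ p) (θ b) ≤ η →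
      dist p b ≤ γ := by
  by_contra hcon
  push_neg at hcon
  have h' : ∀ k : ℕ, ∃ p b : X, s ≤ Metric.infDist (θ p) A ∧
      dist (θ p) (θ b) ≤ 1 / ((k : ℝ) + 1) ∧ γ < dist p b := by
    intro k
    obtain ⟨p, b, h1, h2, h3⟩ := hcon (1 / ((k : ℝ) + 1)) (by positivity)
    exact ⟨p, b, h1, h2, h3⟩
  choose p b h1 h2 h3 using h'
  set w : ℕ → X × X := fun k => (p k, b k) with hw
  obtain ⟨⟨P, B⟩, -, ψ, hψmono, hlim⟩ :=
    isCompact_univ.tendsto_subseq (x := w) (fun k => mem_univ _)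
  have hlP : Tendsto (fun k => p (ψ k)) atTop (nhds P) := (continuous_fst.tendsto _).comp hlim
  have hlB : Tendsto (fun k => b (ψ k)) atTop (nhds B) := (continuous_snd.tendsto _).comp hlim
  have hdPB : Tendsto (fun k => dist (p (ψ k)) (b (ψ k))) atTop (nhds (dist P B)) :=
    hlP.dist hlB
  have hγPB : γ ≤ dist P B := ge_of_tendsto hdPB (Eventually.of_forall fun k => (h3 (ψ k)).le)
  have hθPB : θ P = θ B := by
    have ht1 : Tendsto (fun k => dist (θ (p (ψ k))) (θ (b (ψ k)))) atTop
        (nhds (dist (θ P) (θ B))) := ((hθc.tendsto _).comp hlP).dist ((hθc.tendsto _).comp hlB)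
    have ht2 : Tendsto (fun k => dist (θ (p (ψ k))) (θ (b (ψ k)))) atTop (nhds 0) := by
      apply squeeze_zero (fun k => dist_nonneg)
      · intro k
        exact le_trans (h2 (ψ k)) (AS_one_div_succ_le hψmono k)
      · exact tendsto_one_div_add_atTop_nhds_zero_nat
    have := tendsto_nhds_unique ht1 ht2
    exact dist_le_zero.mp this.le
  have hPfar : s ≤ Metric.infDist (θ P) A := by
    have hcInf : Tendsto (fun k => Metric.infDist (θ (p (ψ k))) A) atTop
        (nhds (Metric.infDist (θ P) A)) :=
      ((Metric.continuous_infDist_pt A).tendsto _).comp ((hθc.tendsto _).comp hlP)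
    exact ge_of_tendsto hcInf (Eventually.of_forall fun k => h1 (ψ k))
  have hPnotA : θ P ∉ A := by
    intro hmem
    rw [Metric.infDist_zero_of_mem hmem] at hPfar
    linarith
  have : P = B := huniq (θ P) hPnotA P B rfl hθPB.symm
  rw [this, dist_self] at hγPB
  linarith

lemma AS_rhoG_cont {X Y X' : Type*} [MetricSpace X] [CompactSpace X] [MetricSpace Y]
    [MetricSpace X'] (θ : X → Y) (φ : X' → Y) (hθc : Continuous θ) (hφc : Continuous φ)
    (A : Set Y) (huniq : ∀ y : Y, y ∉ A → ∀ a b : X, θ a = y → θ b = y → a = b)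
    (ρG : X' → X) (hρG : ∀ x', θ (ρG x') = φ x') :
    ∀ u' : X', φ u' ∉ A → ∀ τ : ℝ, 0 < τ → ∃ r > 0, ∀ t' : X', dist t' u' < r →
      dist (ρG t') (ρG u') ≤ τ := by
  intro u' hu' τ hτ
  by_contra hcon
  push_neg at hcon
  have h' : ∀ k : ℕ, ∃ t' : X', dist t' u' < 1 / ((k : ℝ) + 1) ∧ τ < dist (ρG t') (ρG u') := by
    intro k
    obtain ⟨t', ht1, ht2⟩ := hcon (1 / ((k : ℝ) + 1)) (by positivity)
    exact ⟨t', ht1, ht2⟩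
  choose t' h1 h2 using h'
  have hto : Tendsto t' atTop (nhds u') := by
    rw [tendsto_iff_dist_tendsto_zero]
    apply squeeze_zero (fun k => dist_nonneg) (fun k => (h1 k).le)
    exact tendsto_one_div_add_atTop_nhds_zero_nat
  obtain ⟨L, -, ψ, hψmono, hlim⟩ :=
    isCompact_univ.tendsto_subseq (x := fun k => ρG (t' k)) (fun k => mem_univ _)
  have hθL : θ L = φ u' := by
    have ht1 : Tendsto (fun k => θ (ρG (t' (ψ k)))) atTop (nhds (θ L)) :=
      (hθc.tendsto _).comp hlim
    have ht2 : Tendsto (fun k => θ (ρG (t' (ψ k)))) atTop (nhds (φ u')) := by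
      have : (fun k => θ (ρG (t' (ψ k)))) = fun k => φ (t' (ψ k)) := by
        funext k; exact hρG _
      rw [this]
      exact (hφc.tendsto _).comp (hto.comp hψmono.tendsto_atTop)
    exact tendsto_nhds_unique ht1 ht2
  have hLρ : L = ρG u' := huniq (φ u') hu' L (ρG u') hθL (hρG u')
  have : Tendsto (fun k => dist (ρG (t' (ψ k))) (ρG u')) atTop (nhds 0) := by
    rw [← dist_self L]
    exact hlim.dist (tendsto_const_nhds.congr (fun k => by rw [hLρ]))
  have hτ' : τ ≤ 0 := ge_of_tendsto this (Eventually.of_forall fun k => (h2 (ψ k)).le)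
  linarith

end MoreLemmas
set_option maxHeartbeats 2000000 in
/-- If `(Y,f)` is almost Smale, witnessed by a transitive Smale space
`(X,g)` and a one-to-one a.e., u-resolving and s-resolving factor map `θ : X → Y`, then
every factor map `φ` from an irreducible Smale space `(X',g')` to `Y` factors through
`θ`. -/
theorem stmt11 {X Y X' : Type*} [MetricSpace X] [CompactSpace X]
    [MetricSpace Y] [CompactSpace Y] [MetricSpace X'] [CompactSpace X']
    (g : Equiv.Perm X) (f : Equiv.Perm Y) (g' : Equiv.Perm X')
    (hX : IsSmale g) (hXt : TopTransitive g)
    (hfc : Continuous (⇑f)) (hfc' : Continuous (⇑f.symm)) (hfe : ∃ c > 0, Expansive f c)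
    (θ : X → Y) (hθ : IsFactorMap g f θ)
    (hθu : UResolving g θ) (hθs : SResolving g θ)
    (hθae : ∃ R ∈ residual Y, ∀ y ∈ R, ∃! x : X, θ x = y)
    (hX' : IsSmale g') (hX't : TopTransitive g')
    (φ : X' → Y) (hφ : IsFactorMap g' f φ) :
    ∃ ρ : X' → X, IsFactorMap g' g ρ ∧ φ = θ ∘ ρ := by
  obtain ⟨hgc, hgc', ⟨cX, hcX, heg⟩, hccX⟩ := hX
  obtain ⟨hθcont, hθsurj, hθeq⟩ := hθ
  obtain ⟨hφcont, hφsurj, hφeq⟩ := hφ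
  obtain ⟨hg'c, hg'c', ⟨cX', hcX', heg'⟩, hccX'⟩ := hX'
  obtain ⟨cY, hcY, hef⟩ := hfe
  -- trivial case : X' empty
  rcases isEmpty_or_nonempty X' with hXE | hXNE
  · have hYE : IsEmpty Y := ⟨fun y => (hφsurj y).elim (fun x' _ => hXE.false x')⟩
    have hXemp : IsEmpty X := ⟨fun x => hYE.false (θ x)⟩
    refine ⟨fun x' => (hXE.false x').elim, ⟨?_, ?_, ?_⟩, ?_⟩
    · exact continuous_iff_continuousAt.mpr fun x' => (hXE.false x').elim
    · exact fun x => (hXemp.false x).elim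
    · exact fun x' => (hXE.false x').elim
    · exact funext fun x' => (hXE.false x').elim
  have hYNE : Nonempty Y := ⟨φ (Classical.arbitrary X')⟩
  have hXNE2 : Nonempty X := (hθsurj (Classical.arbitrary Y)).elim fun x _ => ⟨x⟩
  -- the singular set A
  set A : Set Y := {y | ∃ a b : X, θ a = y ∧ θ b = y ∧ a ≠ b} with hAdef
  obtain ⟨δ₀, hδ₀, hsep⟩ :=
    AS_fiber_sep g f θ hgc hgc' hcX heg hcY hef hccX hθcont hθeq hθu hθs
  have hsep' : ∀ a b : X, θ a = θ b → a ≠ b → δ₀ ≤ dist a b := by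
    intro a b he hne
    by_contra h
    exact hne (hsep a b he (not_le.mp h))
  have huniq : ∀ y : Y, y ∉ A → ∀ a b : X, θ a = y → θ b = y → a = b := by
    intro y hy a b ha hb
    by_contra hne
    exact hy ⟨a, b, ha, hb, hne⟩
  have hAclosed : IsClosed A := by
    apply IsSeqClosed.isClosed
    intro ys y hys hy
    choose a b ha hb hne using hys
    set w : ℕ → X × X := fun k => (a k, b k) with hw
    obtain ⟨⟨Al, Bl⟩, -, ψ, hψmono, hlim⟩ :=
      isCompact_univ.tendsto_subseq (x := w) (fun k => mem_univ _)
    have hlA : Tendsto (fun k => a (ψ k)) atTop (nhds Al) := (continuous_fst.tendsto _).comp hlim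
    have hlB : Tendsto (fun k => b (ψ k)) atTop (nhds Bl) := (continuous_snd.tendsto _).comp hlim
    have hyψ : Tendsto (fun k => ys (ψ k)) atTop (nhds y) := hy.comp hψmono.tendsto_atTop
    have hθA : θ Al = y := by
      refine tendsto_nhds_unique ((hθcont.tendsto _).comp hlA) ?_
      exact hyψ.congr (fun k => (ha (ψ k)).symm)
    have hθB : θ Bl = y := by
      refine tendsto_nhds_unique ((hθcont.tendsto _).comp hlB) ?_
      exact hyψ.congr (fun k => (hb (ψ k)).symm)
    have hdist : δ₀ ≤ dist Al Bl := by
      refine ge_of_tendsto (hlA.dist hlB) (Eventually.of_forall fun k => ?_)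
      exact hsep' (a (ψ k)) (b (ψ k)) (by rw [ha (ψ k), hb (ψ k)]) (hne (ψ k))
    exact ⟨Al, Bl, hθA, hθB, fun h => by rw [h, dist_self] at hdist; linarith⟩
  have hAinv : ∀ (n : ℤ) (y : Y), y ∈ A → (f ^ n) y ∈ A := by
    rintro n y ⟨a, b, ha, hb, hne⟩
    exact ⟨(g ^ n) a, (g ^ n) b, by rw [AS_equivar_zpow g f θ hθeq, ha],
      by rw [AS_equivar_zpow g f θ hθeq, hb], fun h => hne ((g ^ n).injective h)⟩
  have hfz_cancel : ∀ (n : ℤ) (y : Y), (f ^ (-n)) ((f ^ n) y) = y := by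
    intro n y
    rw [← AS_zpow_apply_add]
    simp
  have hAinv' : ∀ (n : ℤ) (y : Y), (f ^ n) y ∈ A → y ∈ A := by
    intro n y h
    have := hAinv (-n) _ h
    rwa [hfz_cancel] at this
  obtain ⟨R, hRres, hRuniq⟩ := hθae
  have hRA : ∀ y ∈ R, y ∉ A := by
    rintro y hy ⟨a, b, ha, hb, hne⟩
    exact hne ((hRuniq y hy).unique ha hb)
  have hRdense := dense_of_mem_residual hRres
  -- case : A empty, θ is a conjugacy
  rcases A.eq_empty_or_nonempty with hAe | hAne
  · have hinj : Function.Injective θ := by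
      intro a b h
      by_contra hne
      have : θ a ∈ A := ⟨a, b, rfl, h.symm, hne⟩
      rw [hAe] at this
      exact this
    set E : X ≃ Y := Equiv.ofBijective θ ⟨hinj, hθsurj⟩ with hE
    have hEcoe : ∀ x, E x = θ x := fun x => rfl
    have hhc : Continuous (⇑E) := hθcont
    set H : X ≃ₜ Y := hhc.homeoOfEquivCompactToT2 with hH
    have hHsymm : ∀ y, H.symm y = E.symm y := fun y => rfl
    have hθsymm : ∀ y, θ (E.symm y) = y := fun y => E.apply_symm_apply y
    refine ⟨fun x' => E.symm (φ x'), ⟨?_, ?_, ?_⟩, ?_⟩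
    · have : Continuous (⇑H.symm) := H.symm.continuous
      exact (this.comp hφcont : _)
    · intro x
      obtain ⟨x', hx'⟩ := hφsurj (θ x)
      refine ⟨x', ?_⟩
      show E.symm (φ x') = x
      rw [hx', ← hEcoe, E.symm_apply_apply]
    · intro x'
      show E.symm (φ (g' x')) = g (E.symm (φ x'))
      apply hinj
      rw [hθsymm, hφeq, hθeq, hθsymm]
    · funext x'
      show φ x' = θ (E.symm (φ x'))
      rw [hθsymm]
  -- main case
  obtain ⟨y₀, hy₀R⟩ := hRdense.nonempty
  have hy₀A : y₀ ∉ A := hRA y₀ hy₀R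
  have hs2 : 0 < Metric.infDist y₀ A := (hAclosed.notMem_iff_infDist_pos hAne).mp hy₀A
  set s : ℝ := Metric.infDist y₀ A / 2 with hsdef
  have hs : 0 < s := by positivity
  set O₀ : Set Y := Metric.ball y₀ s with hO₀def
  have hO₀far : ∀ y ∈ O₀, s ≤ Metric.infDist y A := by
    intro y hy
    have h1 : Metric.infDist y₀ A ≤ Metric.infDist y A + dist y₀ y :=
      Metric.infDist_le_infDist_add_dist
    have h2 : dist y₀ y < s := by rw [dist_comm]; exact hy
    rw [hsdef] at *
    linarith
  -- good set G in X'
  set G : Set X' := φ ⁻¹' Aᶜ with hGdef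
  have hGmem : ∀ x' : X', x' ∈ G ↔ φ x' ∉ A := fun x' => Iff.rfl
  have hGopen : IsOpen G := (hAclosed.isOpen_compl).preimage hφcont
  have hGinv : ∀ (n : ℤ) (x' : X'), x' ∈ G → (g' ^ n) x' ∈ G := by
    intro n x' h hmem
    rw [AS_equivar_zpow g' f φ hφeq] at hmem
    exact h (hAinv' n _ hmem)
  obtain ⟨x'₀, hx'₀⟩ := hφsurj y₀
  have hGne : G.Nonempty := ⟨x'₀, by rw [hGmem, hx'₀]; exact hy₀A⟩
  have hg'z_cancel : ∀ (n : ℤ) (z : X'), (g' ^ (-n)) ((g' ^ n) z) = z := by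
    intro n z
    rw [← AS_zpow_apply_add]
    simp
  have hGdense : Dense G := by
    rw [dense_iff_inter_open]
    intro U hU hUne
    obtain ⟨n, z, hz1, hz2⟩ := hX't G U hGopen hU hGne hUne
    refine ⟨z, hz2, ?_⟩
    have := hGinv (-(n : ℤ)) _ hz1
    rwa [hg'z_cancel] at this
  -- the lift on G
  set ρG : X' → X := fun x' => (hθsurj (φ x')).choose with hρGdef
  have hρG : ∀ x', θ (ρG x') = φ x' := fun x' => (hθsurj (φ x')).choose_spec
  -- forward and backward sweeping sets
  set TO : Set X' := ⋃ n : ℕ, (fun z : X' => (g' ^ (n : ℤ)) z) ⁻¹' (φ ⁻¹' O₀) with hTOdef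
  set TO' : Set X' := ⋃ n : ℕ, (fun z : X' => (g' ^ (-(n : ℤ))) z) ⁻¹' (φ ⁻¹' O₀) with hTO'def
  have hO₀open : IsOpen (φ ⁻¹' O₀) := Metric.isOpen_ball.preimage hφcont
  have hO₀ne : (φ ⁻¹' O₀).Nonempty := ⟨x'₀, by
    simp only [mem_preimage, hx'₀, hO₀def]
    exact Metric.mem_ball_self hs⟩
  have hTOopen : IsOpen TO :=
    isOpen_iUnion fun n => hO₀open.preimage (AS_cont_zpow g' hg'c hg'c' n)
  have hTO'open : IsOpen TO' :=
    isOpen_iUnion fun n => hO₀open.preimage (AS_cont_zpow g' hg'c hg'c' _)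
  have hTOdense : Dense TO := by
    rw [dense_iff_inter_open]
    intro U hU hUne
    obtain ⟨n, z, hz1, hz2⟩ := hX't (φ ⁻¹' O₀) U hO₀open hU hO₀ne hUne
    exact ⟨z, hz2, mem_iUnion.mpr ⟨n, hz1⟩⟩
  have hTO'dense : Dense TO' := by
    rw [dense_iff_inter_open]
    intro U hU hUne
    obtain ⟨n, z, hz1, hz2⟩ := hX't U (φ ⁻¹' O₀) hU hO₀open hUne hO₀ne
    refine ⟨(g' ^ (n : ℤ)) z, hz1, mem_iUnion.mpr ⟨n, ?_⟩⟩
    show (g' ^ (-(n : ℤ))) ((g' ^ (n : ℤ)) z) ∈ φ ⁻¹' O₀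
    rwa [hg'z_cancel]
  -- constants
  obtain ⟨γ₁, hγ₁, hgmod⟩ :=
    (Metric.uniformContinuous_iff.mp (CompactSpace.uniformContinuous_of_continuous hgc))
      (δ₀ / 2) (by linarith)
  obtain ⟨γ₂, hγ₂, hgmod'⟩ :=
    (Metric.uniformContinuous_iff.mp (CompactSpace.uniformContinuous_of_continuous hgc'))
      (δ₀ / 2) (by linarith)
  set γ : ℝ := min cX (min (δ₀ / 4) (min (γ₁ / 2) (γ₂ / 2))) with hγdef
  have hγ : 0 < γ := by
    apply lt_min hcX
    apply lt_min (by linarith)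
    exact lt_min (by linarith) (by linarith)
  have hγcX : γ ≤ cX := min_le_left _ _
  have hγδ₀ : γ ≤ δ₀ / 4 := le_trans (min_le_right _ _) (min_le_left _ _)
  have hγγ₁ : γ < γ₁ := by
    have : γ ≤ γ₁ / 2 := le_trans (min_le_right _ _) (le_trans (min_le_right _ _) (min_le_left _ _))
    linarith
  have hγγ₂ : γ < γ₂ := by
    have : γ ≤ γ₂ / 2 := le_trans (min_le_right _ _) (le_trans (min_le_right _ _) (min_le_right _ _))
    linarith
  obtain ⟨ηD, hηD, hD⟩ := AS_lemD θ hθcont hγ hδ₀ hsep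
  obtain ⟨ηF, hηF, hF⟩ := AS_lemF θ hθcont A hs hγ huniq
  set η : ℝ := min ηD ηF with hηdef
  have hη : 0 < η := lt_min hηD hηF
  have hηD' : η ≤ ηD := min_le_left _ _
  have hηF' : η ≤ ηF := min_le_right _ _
  obtain ⟨δφ, hδφ, hφmod⟩ :=
    (Metric.uniformContinuous_iff.mp (CompactSpace.uniformContinuous_of_continuous hφcont)) η hη
  set ε₁ : ℝ := δφ / 4 with hε₁def
  have hε₁ : 0 < ε₁ := by positivity
  have hφ2ε : ∀ a b : X', dist a b ≤ 2 * ε₁ → dist (φ a) (φ b) ≤ η := by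
    intro a b h
    exact (hφmod (show dist a b < δφ by rw [hε₁def] at h; linarith)).le
  obtain ⟨ε'₀, hε'₀, hcc'⟩ := hccX'
  -- the graph closure Γ
  set SΓ : Set (X' × X) := {z | z.1 ∈ G ∧ θ z.2 = φ z.1} with hSΓdef
  set Γ : Set (X' × X) := closure SΓ with hΓdef
  have hΓprop : ∀ z ∈ Γ, θ z.2 = φ z.1 := by
    have hC : IsClosed {z : X' × X | θ z.2 = φ z.1} :=
      isClosed_eq (hθcont.comp continuous_snd) (hφcont.comp continuous_fst)
    exact fun z hz => closure_minimal (fun w hw => hw.2) hC hz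
  have hθeq' : ∀ x, θ (g.symm x) = f.symm (θ x) := by
    intro x
    have := AS_equivar_zpow g f θ hθeq (-1) x
    rwa [zpow_neg_one, zpow_neg_one, Equiv.Perm.inv_def, Equiv.Perm.inv_def] at this
  have hφeq' : ∀ x', φ (g'.symm x') = f.symm (φ x') := by
    intro x'
    have := AS_equivar_zpow g' f φ hφeq (-1) x'
    rwa [zpow_neg_one, zpow_neg_one, Equiv.Perm.inv_def, Equiv.Perm.inv_def] at this
  have hΓinv : ∀ z ∈ Γ, ((g' z.1, g z.2) : X' × X) ∈ Γ := by
    intro z hz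
    have hmS : MapsTo (Prod.map ⇑g' ⇑g) SΓ SΓ := by
      rintro ⟨x', x⟩ ⟨h1, h2⟩
      constructor
      · have := hGinv 1 x' h1
        rwa [zpow_one] at this
      · show θ (g x) = φ (g' x')
        rw [hθeq, hφeq, h2]
    have : (Prod.map ⇑g' ⇑g) z ∈ (Prod.map ⇑g' ⇑g) '' closure SΓ := ⟨z, hz, rfl⟩
    have h2 := image_closure_subset_closure_image (hg'c.prodMap hgc) this
    exact closure_mono hmS.image_subset h2
  have hΓinv' : ∀ z ∈ Γ, ((g'.symm z.1, g.symm z.2) : X' × X) ∈ Γ := by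
    intro z hz
    have hmS : MapsTo (Prod.map ⇑g'.symm ⇑g.symm) SΓ SΓ := by
      rintro ⟨x', x⟩ ⟨h1, h2⟩
      constructor
      · have := hGinv (-1) x' h1
        rwa [zpow_neg_one, Equiv.Perm.inv_def] at this
      · show θ (g.symm x) = φ (g'.symm x')
        rw [hθeq', hφeq', h2]
    have : (Prod.map ⇑g'.symm ⇑g.symm) z ∈ (Prod.map ⇑g'.symm ⇑g.symm) '' closure SΓ :=
      ⟨z, hz, rfl⟩
    have h2 := image_closure_subset_closure_image (hg'c'.prodMap hgc') this
    exact closure_mono hmS.image_subset h2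
  have hΓtotal : ∀ x' : X', ∃ x : X, ((x', x) : X' × X) ∈ Γ := by
    intro x'
    have hx'cl : x' ∈ closure G := hGdense x'
    obtain ⟨u, huG, hulim⟩ := mem_closure_iff_seq_limit.mp hx'cl
    obtain ⟨L, -, ψ, hψmono, hlim⟩ :=
      isCompact_univ.tendsto_subseq (x := fun k => ρG (u k)) (fun k => mem_univ _)
    refine ⟨L, ?_⟩
    have ht : Tendsto (fun k => ((u (ψ k), ρG (u (ψ k))) : X' × X)) atTop (nhds (x', L)) :=
      (hulim.comp hψmono.tendsto_atTop).prodMk_nhds hlim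
    exact mem_closure_of_tendsto ht (Eventually.of_forall fun k => ⟨huG _, hρG _⟩)
  -- THE KEY STEP : single-valuedness of Γ
  have hΓ4 : ∀ (w' : X') (p q : X), ((w', p) : X' × X) ∈ Γ → ((w', q) : X' × X) ∈ Γ → p = q := by
    intro w' p q hp hq
    obtain ⟨useq, huS, hulim⟩ := mem_closure_iff_seq_limit.mp hp
    obtain ⟨vseq, hvS, hvlim⟩ := mem_closure_iff_seq_limit.mp hq
    have hu1 : Tendsto (fun k => (useq k).1) atTop (nhds w') :=
      (continuous_fst.tendsto _).comp hulim
    have hu2 : Tendsto (fun k => (useq k).2) atTop (nhds p) :=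
      (continuous_snd.tendsto _).comp hulim
    have hv1 : Tendsto (fun k => (vseq k).1) atTop (nhds w') :=
      (continuous_fst.tendsto _).comp hvlim
    have hv2 : Tendsto (fun k => (vseq k).2) atTop (nhds q) :=
      (continuous_snd.tendsto _).comp hvlim
    have hθp : θ p = φ w' := by
      refine tendsto_nhds_unique ((hθcont.tendsto _).comp hu2) ?_
      exact ((hφcont.tendsto _).comp hu1).congr (fun k => ((huS k).2).symm)
    have hθq : θ q = φ w' := by
      refine tendsto_nhds_unique ((hθcont.tendsto _).comp hv2) ?_
      exact ((hφcont.tendsto _).comp hv1).congr (fun k => ((hvS k).2).symm)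
    have key : ∀ j : ℕ, ∃ (pj qj mj : X) (c'' : X') (W : ℕ),
        dist pj p ≤ 2 / ((j : ℝ) + 1) ∧ dist qj q ≤ 2 / ((j : ℝ) + 1) ∧
        dist c'' w' ≤ (2 + ε₁) / ((j : ℝ) + 1) ∧ θ mj = φ c'' ∧ j ≤ W ∧
        (∀ n : ℕ, n ≤ W → dist ((g ^ (n : ℤ)) pj) ((g ^ (n : ℤ)) mj) ≤ γ) ∧
        (∀ n : ℕ, n ≤ W → dist ((g ^ (-(n : ℤ))) qj) ((g ^ (-(n : ℤ))) mj) ≤ γ) := by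
      intro j
      set jr : ℝ := 1 / ((j : ℝ) + 1) with hjrdef
      have hjr : 0 < jr := by positivity
      set εj : ℝ := min ε₁ ε'₀ / ((j : ℝ) + 1) with hεjdef
      have hminpos : 0 < min ε₁ ε'₀ := lt_min hε₁ hε'₀
      have hεj : 0 < εj := by
        rw [hεjdef]; positivity
      have hj1 : (1 : ℝ) ≤ (j : ℝ) + 1 := by
        have : (0:ℝ) ≤ (j:ℝ) := Nat.cast_nonneg j
        linarith
      have hεjε'₀ : εj ≤ ε'₀ :=
        le_trans (div_le_self hminpos.le hj1) (min_le_right _ _)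
      have hεjε₁jr : εj ≤ ε₁ * jr := by
        rw [hεjdef, hjrdef, mul_one_div]
        gcongr
        exact min_le_left _ _
      have hεjε₁ : εj ≤ ε₁ := by
        have : ε₁ * jr ≤ ε₁ * 1 := by
          apply mul_le_mul_of_nonneg_left _ hε₁.le
          rw [hjrdef]
          rw [div_le_one (by positivity)]
          exact hj1
        rw [mul_one] at this
        linarith [hεjε₁jr]
      obtain ⟨δ', hδ', hbr⟩ := hcc' εj hεj hεjε'₀
      -- pick a good u-side approximant
      obtain ⟨N₁, hN₁⟩ := Metric.tendsto_atTop.mp hu1 (min (δ' / 4) (jr / 2))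
        (lt_min (by linarith) (by linarith))
      obtain ⟨N₂, hN₂⟩ := Metric.tendsto_atTop.mp hu2 jr hjr
      set k := max N₁ N₂ with hkdef
      have hku1 : dist (useq k).1 w' < min (δ' / 4) (jr / 2) := hN₁ k (le_max_left _ _)
      have hku2 : dist (useq k).2 p < jr := hN₂ k (le_max_right _ _)
      have hkG : (useq k).1 ∈ G := (huS k).1
      have hkρ : ρG (useq k).1 = (useq k).2 :=
        huniq (φ (useq k).1) (hkG) _ _ (hρG _) (huS k).2
      obtain ⟨ru, hru, hct⟩ :=
        AS_rhoG_cont θ φ hθcont hφcont A huniq ρG hρG (useq k).1 hkG jr hjr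
      have hGTO : Dense (G ∩ TO) := hGdense.inter_of_isOpen_left hTOdense hGopen
      obtain ⟨t', htmem, htball⟩ := hGTO.exists_mem_open Metric.isOpen_ball
        ⟨(useq k).1, Metric.mem_ball_self (show (0:ℝ) < min ru (min (δ' / 4) (jr / 2)) from
          lt_min hru (lt_min (by linarith) (by linarith)))⟩
      have htu : dist t' (useq k).1 < min ru (min (δ' / 4) (jr / 2)) := htball
      have htw1 : dist t' w' < δ' / 2 := by
        have h1 := dist_triangle t' (useq k).1 w'
        have h2 : dist t' (useq k).1 < δ' / 4 :=
          lt_of_lt_of_le htu (le_trans (min_le_right _ _) (min_le_left _ _))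
        have h3 : dist (useq k).1 w' < δ' / 4 := lt_of_lt_of_le hku1 (min_le_left _ _)
        linarith
      have htw2 : dist t' w' ≤ jr := by
        have h1 := dist_triangle t' (useq k).1 w'
        have h2 : dist t' (useq k).1 < jr / 2 :=
          lt_of_lt_of_le htu (le_trans (min_le_right _ _) (min_le_right _ _))
        have h3 : dist (useq k).1 w' < jr / 2 := lt_of_lt_of_le hku1 (min_le_right _ _)
        linarith
      have htp : dist (ρG t') p ≤ 2 * jr := by
        have h1 := hct t' (lt_of_lt_of_le htu (min_le_left _ _))
        have h2 := dist_triangle (ρG t') (ρG (useq k).1) p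
        rw [hkρ] at h1 h2
        linarith [hku2.le, h1]
      -- pick a good v-side approximant
      obtain ⟨M₁, hM₁⟩ := Metric.tendsto_atTop.mp hv1 (min (δ' / 4) (jr / 2))
        (lt_min (by linarith) (by linarith))
      obtain ⟨M₂, hM₂⟩ := Metric.tendsto_atTop.mp hv2 jr hjr
      set l := max M₁ M₂ with hldef
      have hlv1 : dist (vseq l).1 w' < min (δ' / 4) (jr / 2) := hM₁ l (le_max_left _ _)
      have hlv2 : dist (vseq l).2 q < jr := hM₂ l (le_max_right _ _)
      have hlG : (vseq l).1 ∈ G := (hvS l).1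
      have hlρ : ρG (vseq l).1 = (vseq l).2 :=
        huniq (φ (vseq l).1) (hlG) _ _ (hρG _) (hvS l).2
      obtain ⟨rv, hrv, hct'⟩ :=
        AS_rhoG_cont θ φ hθcont hφcont A huniq ρG hρG (vseq l).1 hlG jr hjr
      have hGTO' : Dense (G ∩ TO') := hGdense.inter_of_isOpen_left hTO'dense hGopen
      obtain ⟨r', hrmem, hrball⟩ := hGTO'.exists_mem_open Metric.isOpen_ball
        ⟨(vseq l).1, Metric.mem_ball_self (show (0:ℝ) < min rv (min (δ' / 4) (jr / 2)) from
          lt_min hrv (lt_min (by linarith) (by linarith)))⟩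
      have hrv' : dist r' (vseq l).1 < min rv (min (δ' / 4) (jr / 2)) := hrball
      have hrw1 : dist r' w' < δ' / 2 := by
        have h1 := dist_triangle r' (vseq l).1 w'
        have h2 : dist r' (vseq l).1 < δ' / 4 :=
          lt_of_lt_of_le hrv' (le_trans (min_le_right _ _) (min_le_left _ _))
        have h3 : dist (vseq l).1 w' < δ' / 4 := lt_of_lt_of_le hlv1 (min_le_left _ _)
        linarith
      have hrw2 : dist r' w' ≤ jr := by
        have h1 := dist_triangle r' (vseq l).1 w'
        have h2 : dist r' (vseq l).1 < jr / 2 :=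
          lt_of_lt_of_le hrv' (le_trans (min_le_right _ _) (min_le_right _ _))
        have h3 : dist (vseq l).1 w' < jr / 2 := lt_of_lt_of_le hlv1 (min_le_right _ _)
        linarith
      have hrq : dist (ρG r') q ≤ 2 * jr := by
        have h1 := hct' r' (lt_of_lt_of_le hrv' (min_le_left _ _))
        have h2 := dist_triangle (ρG r') (ρG (vseq l).1) q
        rw [hlρ] at h1 h2
        linarith [hlv2.le, h1]
      -- bracket
      have htr : dist t' r' < δ' := by
        have h1 := dist_triangle t' w' r'
        rw [dist_comm w' r'] at h1
        linarith
      obtain ⟨c', ⟨hcs, hcu⟩, -⟩ := hbr t' r' htr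
      -- anchors
      obtain ⟨a, ha⟩ := mem_iUnion.mp htmem.2
      have haO : φ ((g' ^ (a : ℤ)) t') ∈ O₀ := ha
      obtain ⟨b, hb⟩ := mem_iUnion.mp hrmem.2
      have hbO : φ ((g' ^ (-(b : ℤ))) r') ∈ O₀ := hb
      set W := max a b + j with hWdef
      have haW : a ≤ W := le_trans (le_max_left a b) (Nat.le_add_right _ _)
      have hbW : b ≤ W := le_trans (le_max_right a b) (Nat.le_add_right _ _)
      have hjW : j ≤ W := Nat.le_add_left _ _
      -- perturbation of the bracket into G
      obtain ⟨rw₀, hrw₀, hwinc⟩ := AS_window g' hg'c hg'c' c' W (lt_min hεj hjr)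
      obtain ⟨c'', hc''G, hc''ball⟩ := hGdense.exists_mem_open Metric.isOpen_ball
        ⟨c', Metric.mem_ball_self hrw₀⟩
      have hc''win : ∀ n : ℤ, n.natAbs ≤ W →
          dist ((g' ^ n) c'') ((g' ^ n) c') ≤ min εj jr := hwinc c'' hc''ball
      -- image bounds
      have himgF : ∀ n : ℕ, n ≤ W →
          dist ((f ^ (n : ℤ)) (φ c'')) ((f ^ (n : ℤ)) (φ t')) ≤ η := by
        intro n hn
        have h1 : dist ((g' ^ (n : ℤ)) c'') ((g' ^ (n : ℤ)) c') ≤ εj :=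
          le_trans (hc''win (n : ℤ) (by simpa using hn)) (min_le_left _ _)
        have h2 : dist ((g' ^ (n : ℤ)) t') ((g' ^ (n : ℤ)) c') < εj := hcs n
        have h3 : dist ((g' ^ (n : ℤ)) c'') ((g' ^ (n : ℤ)) t') ≤ 2 * ε₁ := by
          have h4 := dist_triangle ((g' ^ (n : ℤ)) c'') ((g' ^ (n : ℤ)) c') ((g' ^ (n : ℤ)) t')
          rw [dist_comm ((g' ^ (n : ℤ)) c') ((g' ^ (n : ℤ)) t')] at h4
          linarith [hεjε₁]
        have h5 := hφ2ε _ _ h3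
        rwa [AS_equivar_zpow g' f φ hφeq, AS_equivar_zpow g' f φ hφeq] at h5
      have himgB : ∀ n : ℕ, n ≤ W →
          dist ((f ^ (-(n : ℤ))) (φ c'')) ((f ^ (-(n : ℤ))) (φ r')) ≤ η := by
        intro n hn
        have h1 : dist ((g' ^ (-(n : ℤ))) c'') ((g' ^ (-(n : ℤ))) c') ≤ εj :=
          le_trans (hc''win (-(n : ℤ)) (by simpa using hn)) (min_le_left _ _)
        have h2 : dist ((g' ^ (-(n : ℤ))) r') ((g' ^ (-(n : ℤ))) c') < εj := hcu n
        have h3 : dist ((g' ^ (-(n : ℤ))) c'') ((g' ^ (-(n : ℤ))) r') ≤ 2 * ε₁ := by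
          have h4 := dist_triangle ((g' ^ (-(n : ℤ))) c'') ((g' ^ (-(n : ℤ))) c')
            ((g' ^ (-(n : ℤ))) r')
          rw [dist_comm ((g' ^ (-(n : ℤ))) c') ((g' ^ (-(n : ℤ))) r')] at h4
          linarith [hεjε₁]
        have h5 := hφ2ε _ _ h3
        rwa [AS_equivar_zpow g' f φ hφeq, AS_equivar_zpow g' f φ hφeq] at h5
      -- θ on orbits
      have hθt : ∀ n : ℤ, θ ((g ^ n) (ρG t')) = (f ^ n) (φ t') := fun n => by
        rw [AS_equivar_zpow g f θ hθeq, hρG]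
      have hθr : ∀ n : ℤ, θ ((g ^ n) (ρG r')) = (f ^ n) (φ r') := fun n => by
        rw [AS_equivar_zpow g f θ hθeq, hρG]
      have hθcc : ∀ n : ℤ, θ ((g ^ n) (ρG c'')) = (f ^ n) (φ c'') := fun n => by
        rw [AS_equivar_zpow g f θ hθeq, hρG]
      -- anchor estimates
      have hanchF : dist ((g ^ (a : ℤ)) (ρG t')) ((g ^ (a : ℤ)) (ρG c'')) ≤ γ := by
        apply hF
        · rw [hθt]
          have he : (f ^ (a : ℤ)) (φ t') = φ ((g' ^ (a : ℤ)) t') :=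
            (AS_equivar_zpow g' f φ hφeq _ _).symm
          rw [he]
          exact hO₀far _ haO
        · rw [hθt, hθcc, dist_comm]
          exact le_trans (himgF a haW) hηF'
      have hanchB : dist ((g ^ (-(b : ℤ))) (ρG r')) ((g ^ (-(b : ℤ))) (ρG c'')) ≤ γ := by
        apply hF
        · rw [hθr]
          have he : (f ^ (-(b : ℤ))) (φ r') = φ ((g' ^ (-(b : ℤ))) r') :=
            (AS_equivar_zpow g' f φ hφeq _ _).symm
          rw [he]
          exact hO₀far _ hbO
        · rw [hθr, hθcc, dist_comm]
          exact le_trans (himgB b hbW) hηF'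
      -- forward chain
      have hstepU : ∀ n : ℕ, n + 1 ≤ W →
          dist ((g ^ (n : ℤ)) (ρG t')) ((g ^ (n : ℤ)) (ρG c'')) ≤ γ →
          dist ((g ^ ((n + 1 : ℕ) : ℤ)) (ρG t')) ((g ^ ((n + 1 : ℕ) : ℤ)) (ρG c'')) ≤ γ := by
        intro n hn h
        have hc : ((n + 1 : ℕ) : ℤ) = (n : ℤ) + 1 := by push_cast; ring
        rw [hc]
        have h1 : dist ((g ^ ((n : ℤ) + 1)) (ρG t')) ((g ^ ((n : ℤ) + 1)) (ρG c'')) ≤ δ₀ / 2 := by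
          rw [AS_zpow_apply_succ, AS_zpow_apply_succ]
          exact (hgmod (lt_of_le_of_lt h hγγ₁)).le
        apply hD _ _ h1
        rw [hθt, hθcc, dist_comm, ← hc]
        exact le_trans (himgF (n + 1) hn) hηD'
      have hstepD : ∀ n : ℕ, n + 1 ≤ W →
          dist ((g ^ ((n + 1 : ℕ) : ℤ)) (ρG t')) ((g ^ ((n + 1 : ℕ) : ℤ)) (ρG c'')) ≤ γ →
          dist ((g ^ (n : ℤ)) (ρG t')) ((g ^ (n : ℤ)) (ρG c'')) ≤ γ := by
        intro n hn h
        have hc : ((n + 1 : ℕ) : ℤ) = (n : ℤ) + 1 := by push_cast; ring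
        rw [hc] at h
        have hr1 : ∀ x : X, (g ^ (n : ℤ)) x = g.symm ((g ^ ((n : ℤ) + 1)) x) := by
          intro x
          have h2 := AS_zpow_apply_pred g ((n : ℤ) + 1) x
          rwa [add_sub_cancel_right] at h2
        have h1 : dist ((g ^ (n : ℤ)) (ρG t')) ((g ^ (n : ℤ)) (ρG c'')) ≤ δ₀ / 2 := by
          rw [hr1, hr1]
          exact (hgmod' (lt_of_le_of_lt h hγγ₂)).le
        apply hD _ _ h1
        rw [hθt, hθcc, dist_comm]
        exact le_trans (himgF n (by omega)) hηD'
      have hFwdAll : ∀ n : ℕ, n ≤ W →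
          dist ((g ^ (n : ℤ)) (ρG t')) ((g ^ (n : ℤ)) (ρG c'')) ≤ γ := by
        have hdown : ∀ i : ℕ,
            dist ((g ^ ((a - i : ℕ) : ℤ)) (ρG t')) ((g ^ ((a - i : ℕ) : ℤ)) (ρG c'')) ≤ γ := by
          intro i
          induction i with
          | zero => simpa using hanchF
          | succ i ih =>
              rcases le_or_gt a i with h | h
              · rw [show a - (i + 1) = a - i by omega]
                exact ih
              · apply hstepD (a - (i + 1)) (by omega)
                rw [show (a - (i + 1)) + 1 = a - i by omega]
                exact ih
        have hup : ∀ n : ℕ, a ≤ n → n ≤ W →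
            dist ((g ^ (n : ℤ)) (ρG t')) ((g ^ (n : ℤ)) (ρG c'')) ≤ γ := by
          intro n han
          induction n, han using Nat.le_induction with
          | base => intro _; exact hanchF
          | succ n hn ih => intro hW; exact hstepU n hW (ih (by omega))
        intro n hn
        rcases le_or_gt n a with h | h
        · have h2 := hdown (a - n)
          rwa [show a - (a - n) = n by omega] at h2
        · exact hup n h.le hn
      -- backward chain
      have hstepU' : ∀ n : ℕ, n + 1 ≤ W →
          dist ((g ^ (-(n : ℤ))) (ρG r')) ((g ^ (-(n : ℤ))) (ρG c'')) ≤ γ →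
          dist ((g ^ (-((n + 1 : ℕ) : ℤ))) (ρG r')) ((g ^ (-((n + 1 : ℕ) : ℤ))) (ρG c'')) ≤ γ := by
        intro n hn h
        have hc : (-((n + 1 : ℕ) : ℤ)) = -(n : ℤ) - 1 := by push_cast; ring
        rw [hc]
        have h1 : dist ((g ^ (-(n : ℤ) - 1)) (ρG r')) ((g ^ (-(n : ℤ) - 1)) (ρG c'')) ≤ δ₀ / 2 := by
          rw [AS_zpow_apply_pred, AS_zpow_apply_pred]
          exact (hgmod' (lt_of_le_of_lt h hγγ₂)).le
        apply hD _ _ h1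
        rw [hθr, hθcc, dist_comm, ← hc]
        exact le_trans (himgB (n + 1) hn) hηD'
      have hstepD' : ∀ n : ℕ, n + 1 ≤ W →
          dist ((g ^ (-((n + 1 : ℕ) : ℤ))) (ρG r')) ((g ^ (-((n + 1 : ℕ) : ℤ))) (ρG c'')) ≤ γ →
          dist ((g ^ (-(n : ℤ))) (ρG r')) ((g ^ (-(n : ℤ))) (ρG c'')) ≤ γ := by
        intro n hn h
        have hc : (-((n + 1 : ℕ) : ℤ)) = -(n : ℤ) - 1 := by push_cast; ring
        rw [hc] at h
        have hr1 : ∀ x : X, (g ^ (-(n : ℤ))) x = g ((g ^ (-(n : ℤ) - 1)) x) := by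
          intro x
          have h2 := AS_zpow_apply_succ g (-(n : ℤ) - 1) x
          rwa [sub_add_cancel] at h2
        have h1 : dist ((g ^ (-(n : ℤ))) (ρG r')) ((g ^ (-(n : ℤ))) (ρG c'')) ≤ δ₀ / 2 := by
          rw [hr1, hr1]
          exact (hgmod (lt_of_le_of_lt h hγγ₁)).le
        apply hD _ _ h1
        rw [hθr, hθcc, dist_comm]
        exact le_trans (himgB n (by omega)) hηD'
      have hBwdAll : ∀ n : ℕ, n ≤ W →
          dist ((g ^ (-(n : ℤ))) (ρG r')) ((g ^ (-(n : ℤ))) (ρG c'')) ≤ γ := by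
        have hdown : ∀ i : ℕ,
            dist ((g ^ (-((b - i : ℕ) : ℤ))) (ρG r')) ((g ^ (-((b - i : ℕ) : ℤ))) (ρG c'')) ≤ γ := by
          intro i
          induction i with
          | zero => simpa using hanchB
          | succ i ih =>
              rcases le_or_gt b i with h | h
              · rw [show b - (i + 1) = b - i by omega]
                exact ih
              · apply hstepD' (b - (i + 1)) (by omega)
                rw [show (b - (i + 1)) + 1 = b - i by omega]
                exact ih
        have hup : ∀ n : ℕ, b ≤ n → n ≤ W →
            dist ((g ^ (-(n : ℤ))) (ρG r')) ((g ^ (-(n : ℤ))) (ρG c'')) ≤ γ := by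
          intro n hbn
          induction n, hbn using Nat.le_induction with
          | base => intro _; exact hanchB
          | succ n hn ih => intro hW; exact hstepU' n hW (ih (by omega))
        intro n hn
        rcases le_or_gt n b with h | h
        · have h2 := hdown (b - n)
          rwa [show b - (b - n) = n by omega] at h2
        · exact hup n h.le hn
      -- package
      refine ⟨ρG t', ρG r', ρG c'', c'', W, ?_, ?_, ?_, hρG c'', hjW, hFwdAll, hBwdAll⟩
      · rw [show (2 : ℝ) / ((j : ℝ) + 1) = 2 * jr by rw [hjrdef]; ring]
        exact htp
      · rw [show (2 : ℝ) / ((j : ℝ) + 1) = 2 * jr by rw [hjrdef]; ring]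
        exact hrq
      · have h0 : dist c'' c' ≤ jr := by
          have h1 := hc''win 0 (by simp)
          simp only [zpow_zero, Equiv.Perm.one_apply] at h1
          exact le_trans h1 (min_le_right _ _)
        have h1 : dist c' t' < εj := by
          have h2 := hcs 0
          simp only [Nat.cast_zero, zpow_zero, Equiv.Perm.one_apply] at h2
          rw [dist_comm]
          exact h2
        have h2 := dist_triangle c'' c' w'
        have h3 := dist_triangle c' t' w'
        have : dist c'' w' ≤ jr + (ε₁ * jr + jr) := by
          have h4 : dist c' w' ≤ ε₁ * jr + jr := by
            have := le_trans h1.le hεjε₁jr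
            linarith
          linarith
        rw [show (2 + ε₁) / ((j : ℝ) + 1) = jr + (ε₁ * jr + jr) by rw [hjrdef]; ring]
        exact this
    -- limit phase
    choose pj qj mj cj Wj hh1 hh2 hh3 hh4 hh5 hh6 hh7 using key
    obtain ⟨m, -, ψ, hψmono, hmlim⟩ :=
      isCompact_univ.tendsto_subseq (x := mj) (fun j => mem_univ _)
    have hjr0 : Tendsto (fun j : ℕ => 1 / ((j : ℝ) + 1)) atTop (nhds 0) :=
      tendsto_one_div_add_atTop_nhds_zero_nat
    have hconst : ∀ C : ℝ, Tendsto (fun j : ℕ => C / ((j : ℝ) + 1)) atTop (nhds 0) := by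
      intro C
      have he : (fun j : ℕ => C / ((j : ℝ) + 1)) = fun j : ℕ => C * (1 / ((j : ℝ) + 1)) :=
        funext fun j => by rw [mul_one_div]
      rw [he]
      simpa using hjr0.const_mul C
    have hp_lim : Tendsto pj atTop (nhds p) := by
      rw [tendsto_iff_dist_tendsto_zero]
      exact squeeze_zero (fun j => dist_nonneg) (fun j => hh1 j) (hconst 2)
    have hq_lim : Tendsto qj atTop (nhds q) := by
      rw [tendsto_iff_dist_tendsto_zero]
      exact squeeze_zero (fun j => dist_nonneg) (fun j => hh2 j) (hconst 2)
    have hc_lim : Tendsto cj atTop (nhds w') := by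
      rw [tendsto_iff_dist_tendsto_zero]
      exact squeeze_zero (fun j => dist_nonneg) (fun j => hh3 j) (hconst (2 + ε₁))
    have hθm : θ m = φ w' := by
      refine tendsto_nhds_unique ((hθcont.tendsto _).comp hmlim) ?_
      exact ((hφcont.tendsto _).comp (hc_lim.comp hψmono.tendsto_atTop)).congr
        (fun j => (hh4 (ψ j)).symm)
    have hfwd : ∀ n : ℕ, dist ((g ^ (n : ℤ)) p) ((g ^ (n : ℤ)) m) ≤ γ := by
      intro n
      have hcn := AS_cont_zpow g hgc hgc' (n : ℤ)
      have hT : Tendsto (fun j => dist ((g ^ (n : ℤ)) (pj (ψ j))) ((g ^ (n : ℤ)) (mj (ψ j))))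
          atTop (nhds (dist ((g ^ (n : ℤ)) p) ((g ^ (n : ℤ)) m))) :=
        ((hcn.tendsto _).comp (hp_lim.comp hψmono.tendsto_atTop)).dist ((hcn.tendsto _).comp hmlim)
      refine le_of_tendsto hT ?_
      filter_upwards [eventually_ge_atTop n] with j hj
      exact hh6 (ψ j) n (le_trans (le_trans hj hψmono.le_apply) (hh5 (ψ j)))
    have hbwd : ∀ n : ℕ, dist ((g ^ (-(n : ℤ))) q) ((g ^ (-(n : ℤ))) m) ≤ γ := by
      intro n
      have hcn := AS_cont_zpow g hgc hgc' (-(n : ℤ))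
      have hT : Tendsto (fun j => dist ((g ^ (-(n : ℤ))) (qj (ψ j))) ((g ^ (-(n : ℤ))) (mj (ψ j))))
          atTop (nhds (dist ((g ^ (-(n : ℤ))) q) ((g ^ (-(n : ℤ))) m))) :=
        ((hcn.tendsto _).comp (hq_lim.comp hψmono.tendsto_atTop)).dist ((hcn.tendsto _).comp hmlim)
      refine le_of_tendsto hT ?_
      filter_upwards [eventually_ge_atTop n] with j hj
      exact hh7 (ψ j) n (le_trans (le_trans hj hψmono.le_apply) (hh5 (ψ j)))
    have hmp : m = p := by
      have hst : m ∈ stableSet g p :=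
        AS_forward_tendsto g hgc hgc' heg (fun n => le_trans (hfwd n) hγcX)
      exact hθs p hst (AS_self_stable g p) (by rw [hθm, hθp])
    have hmq : m = q := by
      have hun : m ∈ unstableSet g q :=
        AS_backward_tendsto g hgc hgc' heg (fun n => le_trans (hbwd n) hγcX)
      exact hθu q hun (AS_self_unstable g q) (by rw [hθm, hθq])
    rw [← hmp, hmq]
  -- assemble ρ
  choose ρ hρΓ using hΓtotal
  have hρθ : ∀ x', θ (ρ x') = φ x' := fun x' => hΓprop _ (hρΓ x')
  have hρeq : ∀ x', ρ (g' x') = g (ρ x') := by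
    intro x'
    have h1 : ((g' x', g (ρ x')) : X' × X) ∈ Γ := hΓinv _ (hρΓ x')
    exact hΓ4 (g' x') _ _ (hρΓ (g' x')) h1
  have hρcont : Continuous ρ := by
    rw [continuous_iff_seqContinuous]
    intro u x' hu
    apply tendsto_of_subseq_tendsto
    intro ns hns
    obtain ⟨L, -, ψ, hψmono, hlim⟩ :=
      isCompact_univ.tendsto_subseq (x := fun k => ρ (u (ns k))) (fun k => mem_univ _)
    refine ⟨ψ, ?_⟩
    have hpair : Tendsto (fun k => ((u (ns (ψ k)), ρ (u (ns (ψ k)))) : X' × X)) atTop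
        (nhds (x', L)) :=
      (hu.comp ((hns.comp hψmono.tendsto_atTop))).prodMk_nhds hlim
    have hΓL : ((x', L) : X' × X) ∈ Γ := by
      have : IsClosed Γ := isClosed_closure
      exact this.mem_of_tendsto hpair (Eventually.of_forall fun k => hρΓ _)
    have : L = ρ x' := hΓ4 x' L (ρ x') hΓL (hρΓ x')
    rwa [this] at hlim
  have hρsurj : Function.Surjective ρ := by
    have hKcl : IsClosed (range ρ) := (isCompact_range hρcont).isClosed
    by_contra hcon
    rw [Function.Surjective] at hcon
    push_neg at hcon
    obtain ⟨x₁, hx₁⟩ := hcon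
    have hsub : (range ρ)ᶜ ⊆ θ ⁻¹' A := by
      intro x hx
      by_contra hxA
      obtain ⟨x'', hx''⟩ := hφsurj (θ x)
      have : ρ x'' = x := huniq (θ x) hxA (ρ x'') x (by rw [hρθ, hx'']) rfl
      exact hx ⟨x'', this⟩
    obtain ⟨xx₀, hxx₀⟩ := hθsurj y₀
    have hV₀ : xx₀ ∈ θ ⁻¹' Aᶜ := by
      simp only [mem_preimage, mem_compl_iff, hxx₀]
      exact hy₀A
    obtain ⟨n, z, hz1, hz2⟩ := hXt (range ρ)ᶜ (θ ⁻¹' Aᶜ)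
      hKcl.isOpen_compl ((hAclosed.isOpen_compl).preimage hθcont)
      ⟨x₁, fun h => hx₁ h.choose h.choose_spec⟩ ⟨xx₀, hV₀⟩
    have hzA : θ ((g ^ (n : ℤ)) z) ∈ A := hsub hz1
    rw [AS_equivar_zpow g f θ hθeq] at hzA
    exact hz2 (hAinv' _ _ hzA)
  exact ⟨ρ, ⟨hρcont, hρsurj, hρeq⟩, funext fun x' => (hρθ x').symm⟩
end

section
/- Let (X,F) be a Smale space. Then the chain recurrent set R(F) decomposes as a finite disjoint union of compact F-invariant sets B₁, …, B_l such that each (B_i, F|_{B_i}) is a transitive Smale space. -/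
open Filter Topology Set

/-- `x` is chain recurrent: for every `ε > 0` there is an `ε`-pseudo-orbit from `x`
back to `x`. -/
def ChainRecurrent {X : Type*} [MetricSpace X] (f : Equiv.Perm X) (x : X) : Prop :=
  ∀ ε > 0, ∃ n : ℕ, 0 < n ∧ ∃ z : ℕ → X, z 0 = x ∧ z n = x ∧
    ∀ i < n, dist (f (z i)) (z (i + 1)) < ε

/-- Topological transitivity of `f` restricted to an invariant set `B`. -/
def TransitiveOnSet {X : Type*} [MetricSpace X] (f : Equiv.Perm X) (B : Set X) : Prop :=
  ∀ U V : Set X, IsOpen U → IsOpen V → (U ∩ B).Nonempty → (V ∩ B).Nonempty →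
    ∃ n : ℕ, ((f ^ (n : ℤ)) ⁻¹' U ∩ V ∩ B).Nonempty

/-- The restriction of `f` to the invariant set `B` is a Smale space: expansive with
canonical coordinates within `B`. -/
def IsSmaleOnSet {X : Type*} [MetricSpace X] (f : Equiv.Perm X) (B : Set X) : Prop :=
  (∃ c > 0, ∀ p ∈ B, ∀ q ∈ B, p ≠ q → ∃ n : ℤ, c < dist ((f ^ n) p) ((f ^ n) q)) ∧
  ∃ ε₀ > 0, ∀ ε : ℝ, 0 < ε → ε ≤ ε₀ → ∃ δ > 0, ∀ x ∈ B, ∀ y ∈ B, dist x y < δ →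
    ∃! z, z ∈ B ∩ Ws f ε x ∩ Wu f ε y

set_option linter.unusedSectionVars false
set_option linter.unusedVariables false
set_option maxHeartbeats 1000000


section Aux
variable {X : Type*} [MetricSpace X] [CompactSpace X] (F : Equiv.Perm X)

lemma apply_zpow (i : ℤ) (x : X) : F ((F ^ i) x) = (F ^ (i + 1)) x := by
  rw [add_comm, zpow_add, zpow_one]; rfl

lemma zpow_apply_zpow (i j : ℤ) (x : X) : (F ^ i) ((F ^ j) x) = (F ^ (i + j)) x := by
  rw [zpow_add]; rfl

lemma cont_pow (g : Equiv.Perm X) (hg : Continuous (⇑g)) : ∀ n : ℕ, Continuous ⇑(g ^ n) := by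
  intro n
  induction n with
  | zero => simpa using continuous_id
  | succ k ih =>
    have : ⇑(g ^ (k + 1)) = ⇑(g ^ k) ∘ ⇑g := by ext x; rw [pow_succ]; rfl
    rw [this]; exact ih.comp hg

lemma cont_zpow (hF : Continuous (⇑F)) (hF' : Continuous (⇑F.symm)) (i : ℤ) :
    Continuous ⇑(F ^ i) := by
  cases i with
  | ofNat n => exact cont_pow F hF n
  | negSucc n =>
    have h1 : (F ^ (Int.negSucc n)) = (F⁻¹) ^ (n + 1) := by
      rw [zpow_negSucc, inv_pow]
    rw [h1]
    exact cont_pow F⁻¹ hF' (n + 1)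

/-- uniform expansivity -/
lemma unif_expansive (hF : Continuous (⇑F)) (hF' : Continuous (⇑F.symm))
    {c : ℝ} (hc : 0 < c) (hexp : Expansive F c) {β : ℝ} (hβ : 0 < β) :
    ∃ N : ℕ, ∀ u v : X, β ≤ dist u v →
      ∃ k : ℤ, k.natAbs ≤ N ∧ c < dist ((F ^ k) u) ((F ^ k) v) := by
  set K : Set (X × X) := {p | β ≤ dist p.1 p.2} with hK
  have hKc : IsCompact K := by
    have : IsClosed K := by
      have : K = (fun p : X × X => dist p.1 p.2) ⁻¹' (Ici β) := rfl
      rw [this]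
      exact (isClosed_Ici).preimage (by continuity)
    exact this.isCompact
  set U : ℤ → Set (X × X) := fun n => {p | c < dist ((F ^ n) p.1) ((F ^ n) p.2)} with hU
  have hUopen : ∀ n, IsOpen (U n) := by
    intro n
    have : U n = (fun p : X × X => dist ((F ^ n) p.1) ((F ^ n) p.2)) ⁻¹' (Ioi c) := rfl
    rw [this]
    exact isOpen_Ioi.preimage (by
      apply Continuous.dist
      · exact (cont_zpow F hF hF' n).comp continuous_fst
      · exact (cont_zpow F hF hF' n).comp continuous_snd)
  have hcover : K ⊆ ⋃ n, U n := by
    rintro ⟨u, v⟩ huv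
    have hne : u ≠ v := by
      intro h; subst h; simp only [hK, mem_setOf_eq, dist_self] at huv; linarith
    obtain ⟨n, hn⟩ := hexp u v hne
    exact mem_iUnion.2 ⟨n, hn⟩
  obtain ⟨t, ht⟩ := hKc.elim_finite_subcover U hUopen hcover
  refine ⟨t.sup (fun n => n.natAbs), fun u v huv => ?_⟩
  have h2 := ht (show (u, v) ∈ K from huv)
  rw [mem_iUnion₂] at h2
  obtain ⟨k, hkt, hk⟩ := h2
  exact ⟨k, Finset.le_sup hkt, hk⟩

/-- uniform forward contraction on stable sets -/
lemma ws_contraction (hF : Continuous (⇑F)) (hF' : Continuous (⇑F.symm))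
    {c : ℝ} (hc : 0 < c) (hexp : Expansive F c) {ε : ℝ} (hεc : ε ≤ c)
    {β : ℝ} (hβ : 0 < β) :
    ∃ N : ℕ, ∀ x y : X, y ∈ Ws F ε x → ∀ n : ℕ, N ≤ n →
      dist ((F ^ (n : ℤ)) x) ((F ^ (n : ℤ)) y) < β := by
  obtain ⟨N, hN⟩ := unif_expansive F hF hF' hc hexp hβ
  refine ⟨N, fun x y hy n hn => ?_⟩
  by_contra hcon
  push_neg at hcon
  obtain ⟨k, hkN, hk⟩ := hN _ _ hcon
  have hnk : (0 : ℤ) ≤ k + (n : ℤ) := by omega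
  set m : ℕ := (k + (n : ℤ)).toNat with hm
  have hmz : ((m : ℤ)) = k + (n : ℤ) := Int.toNat_of_nonneg hnk
  have hsm := hy m
  rw [hmz] at hsm
  rw [zpow_apply_zpow, zpow_apply_zpow] at hk
  linarith [hk, hsm, hεc]

end Aux

section Aux2
variable {X : Type*} [MetricSpace X] [CompactSpace X] (F : Equiv.Perm X)

/-- uniform backward contraction on unstable sets -/
lemma wu_contraction (hF : Continuous (⇑F)) (hF' : Continuous (⇑F.symm))
    {c : ℝ} (hc : 0 < c) (hexp : Expansive F c) {ε : ℝ} (hεc : ε ≤ c)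
    {β : ℝ} (hβ : 0 < β) :
    ∃ N : ℕ, ∀ x y : X, y ∈ Wu F ε x → ∀ n : ℕ, N ≤ n →
      dist ((F ^ (-(n : ℤ))) x) ((F ^ (-(n : ℤ))) y) < β := by
  obtain ⟨N, hN⟩ := unif_expansive F hF hF' hc hexp hβ
  refine ⟨N, fun x y hy n hn => ?_⟩
  by_contra hcon
  push_neg at hcon
  obtain ⟨k, hkN, hk⟩ := hN _ _ hcon
  have hnk : k + (-(n : ℤ)) ≤ 0 := by omega
  set m : ℕ := (-(k + (-(n : ℤ)))).toNat with hm
  have hmz : (-(m : ℤ)) = k + (-(n : ℤ)) := by omega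
  have hsm := hy m
  rw [hmz] at hsm
  rw [zpow_apply_zpow, zpow_apply_zpow] at hk
  linarith [hk, hsm, hεc]

end Aux2


section Chains
variable {X : Type*} [MetricSpace X] [CompactSpace X] (F : Equiv.Perm X)

lemma apply_zpow' (i : ℤ) (x : X) : F ((F ^ i) x) = (F ^ (i + 1)) x := by
  rw [add_comm, zpow_add, zpow_one]; rfl

/-- a `γ`-pseudo-orbit from `a` to `b` -/
def ChainFrom (γ : ℝ) (a b : X) : Prop :=
  ∃ n : ℕ, 0 < n ∧ ∃ z : ℕ → X, z 0 = a ∧ z n = b ∧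
    ∀ i < n, dist (F (z i)) (z (i + 1)) < γ

/-- chains from `a` to `b` at every fineness -/
def ChLE (a b : X) : Prop := ∀ γ : ℝ, 0 < γ → ChainFrom F γ a b

lemma chainRecurrent_iff (x : X) :
    ChainRecurrent F x ↔ ChLE F x x := Iff.rfl

lemma chain_single {γ : ℝ} {a b : X} (h : dist (F a) b < γ) : ChainFrom F γ a b := by
  refine ⟨1, one_pos, fun i => if i = 0 then a else b, by simp, by simp, ?_⟩
  intro i hi
  interval_cases i
  simpa using h

lemma chain_concat {γ : ℝ} {a b c : X} (h1 : ChainFrom F γ a b) (h2 : ChainFrom F γ b c) :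
    ChainFrom F γ a c := by
  obtain ⟨n, hn, z, hz0, hzn, hj⟩ := h1
  obtain ⟨n', hn', z', hz0', hzn', hj'⟩ := h2
  refine ⟨n + n', by omega, fun i => if i < n then z i else z' (i - n), ?_, ?_, ?_⟩
  · simp [hn, hz0]
  · have : ¬ (n + n' < n) := by omega
    simp [this, hzn']
  · intro i hi
    by_cases h : i < n
    · by_cases h2 : i + 1 < n
      · simpa [h, h2] using hj i h
      · have hin : i + 1 = n := by omega
        have : ¬ (i + 1 < n) := by omega
        simp only [h, this, if_true, if_false]
        have e : i + 1 - n = 0 := by omega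
        rw [e, hz0', ← hzn, ← hin]
        exact hj i h
    · have h3 : ¬ (i + 1 < n) := by omega
      simp only [h, h3, if_false]
      have : i + 1 - n = (i - n) + 1 := by omega
      rw [this]
      exact hj' (i - n) (by omega)

lemma chain_orbit {γ : ℝ} (hγ : 0 < γ) (a : X) (s : ℤ) (k : ℕ) (hk : 0 < k) :
    ChainFrom F γ ((F ^ s) a) ((F ^ (s + (k : ℤ))) a) := by
  refine ⟨k, hk, fun i => (F ^ (s + (i : ℤ))) a, by simp, rfl, ?_⟩
  intro i hi
  rw [apply_zpow']
  have : s + (i : ℤ) + 1 = s + ((i + 1 : ℕ) : ℤ) := by push_cast; ring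
  rw [this, dist_self]
  exact hγ

lemma chain_head {γ ρ : ℝ} {a a' b : X} (h : ChainFrom F γ a b)
    (ha : dist (F a') (F a) < ρ) : ChainFrom F (γ + ρ) a' b := by
  have hρ : 0 ≤ ρ := le_of_lt (lt_of_le_of_lt dist_nonneg ha)
  obtain ⟨n, hn, z, hz0, hzn, hj⟩ := h
  refine ⟨n, hn, fun i => if i = 0 then a' else z i, by simp, by simp [Nat.pos_iff_ne_zero.mp hn, hzn], ?_⟩
  intro i hi
  by_cases h0 : i = 0
  · subst h0
    simp only [if_true, if_neg one_ne_zero]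
    calc dist (F a') (z 1) ≤ dist (F a') (F a) + dist (F a) (z 1) := dist_triangle _ _ _
      _ < ρ + γ := by
          have := hj 0 hn
          rw [hz0] at this
          exact add_lt_add ha this
      _ = γ + ρ := by ring
  · simp only [if_neg h0, if_neg (Nat.succ_ne_zero i)]
    exact lt_of_lt_of_le (hj i hi) (by linarith)

lemma chain_tail {γ ρ : ℝ} {a b b' : X} (h : ChainFrom F γ a b)
    (hb : dist b b' < ρ) : ChainFrom F (γ + ρ) a b' := by
  have hρ : 0 ≤ ρ := le_of_lt (lt_of_le_of_lt dist_nonneg hb)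
  obtain ⟨n, hn, z, hz0, hzn, hj⟩ := h
  refine ⟨n, hn, fun i => if i = n then b' else z i, by simp only []; rw [show ((if 0 = n then b' else z 0) = a) ↔ _ from Iff.rfl]; rw [if_neg (by omega), hz0], by simp, ?_⟩
  intro i hi
  have hin : i ≠ n := by omega
  by_cases h1 : i + 1 = n
  · simp only [if_neg hin, if_pos h1]
    calc dist (F (z i)) b' ≤ dist (F (z i)) b + dist b b' := dist_triangle _ _ _
      _ < γ + ρ := by
          have := hj i hi
          rw [h1, hzn] at this
          exact add_lt_add this hb
  · simp only [if_neg hin, if_neg h1]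
    exact lt_of_lt_of_le (hj i hi) (by linarith)

end Chains

section Chains2
variable {X : Type*} [MetricSpace X] [CompactSpace X] (F : Equiv.Perm X)

lemma modulus' {g : X → X} (hg : Continuous g) {γ : ℝ} (hγ : 0 < γ) :
    ∃ η > 0, ∀ a b : X, dist a b < η → dist (g a) (g b) < γ := by
  have := (CompactSpace.uniformContinuous_of_continuous hg)
  rw [Metric.uniformContinuous_iff] at this
  obtain ⟨η, hη, h⟩ := this γ hγ
  exact ⟨η, hη, fun a b hab => h hab⟩

/-- from a recurrent point, there are chains from `F x` back to `x` -/
lemma chLE_F_self (hF : Continuous (⇑F)) {x : X} (hx : ChainRecurrent F x) :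
    ChLE F (F x) x := by
  intro γ hγ
  obtain ⟨η, hη, hmod⟩ := modulus' hF (half_pos hγ)
  have hγ' : 0 < min (γ/2) η := lt_min (half_pos hγ) hη
  obtain ⟨n, hn, z, hz0, hzn, hj⟩ := hx _ hγ'
  have hminl := min_le_left (γ/2) η
  have hminr := min_le_right (γ/2) η
  rcases Nat.lt_or_ge n 2 with h2 | h2
  · -- n = 1
    have hn1 : n = 1 := by omega
    subst hn1
    have hj0 := hj 0 (by omega)
    rw [hz0, hzn] at hj0
    apply chain_single
    calc dist (F (F x)) x ≤ dist (F (F x)) (F x) + dist (F x) x := dist_triangle _ _ _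
      _ < γ/2 + min (γ/2) η :=
          add_lt_add (hmod _ _ (lt_of_lt_of_le hj0 hminr)) hj0
      _ ≤ γ := by linarith
  · -- n ≥ 2
    refine ⟨n - 1, by omega, fun i => if i = 0 then F x else z (i + 1), by simp, ?_, ?_⟩
    · show (if n - 1 = 0 then F x else z (n - 1 + 1)) = x
      rw [if_neg (by omega)]
      have e : n - 1 + 1 = n := by omega
      rw [e, hzn]
    · intro i hi
      by_cases h0 : i = 0
      · subst h0
        show dist (F (if (0:ℕ) = 0 then F x else z 1)) (if (1:ℕ) = 0 then F x else z 2) < γ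
        rw [if_pos rfl, if_neg one_ne_zero]
        have hj0 := hj 0 (by omega)
        rw [hz0] at hj0
        calc dist (F (F x)) (z 2) ≤ dist (F (F x)) (F (z 1)) + dist (F (z 1)) (z 2) :=
              dist_triangle _ _ _
          _ < γ/2 + min (γ/2) η :=
              add_lt_add (hmod _ _ (lt_of_lt_of_le hj0 hminr)) (hj 1 (by omega))
          _ ≤ γ := by linarith
      · show dist (F (if i = 0 then F x else z (i+1))) (if i + 1 = 0 then F x else z (i+2)) < γ
        rw [if_neg h0, if_neg (Nat.succ_ne_zero i)]
        exact lt_of_lt_of_le (hj (i+1) (by omega)) (by linarith)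

/-- from a recurrent point, there are chains from `x` to `F.symm x` -/
lemma chLE_self_symm (hF' : Continuous (⇑F.symm)) {x : X} (hx : ChainRecurrent F x) :
    ChLE F x (F.symm x) := by
  intro γ hγ
  obtain ⟨η, hη, hmod⟩ := modulus' hF' (half_pos hγ)
  have hγ' : 0 < min (γ/2) η := lt_min (half_pos hγ) hη
  obtain ⟨n, hn, z, hz0, hzn, hj⟩ := hx _ hγ'
  have hminl := min_le_left (γ/2) η
  have hminr := min_le_right (γ/2) η
  rcases Nat.lt_or_ge n 2 with h2 | h2
  · -- n = 1
    have hn1 : n = 1 := by omega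
    subst hn1
    have hj0 := hj 0 (by omega)
    rw [hz0, hzn] at hj0
    apply chain_single
    have h1 : dist x (F.symm x) < γ/2 := by
      have := hmod (F x) x (lt_of_lt_of_le hj0 hminr)
      rwa [Equiv.symm_apply_apply] at this
    calc dist (F x) (F.symm x) ≤ dist (F x) x + dist x (F.symm x) := dist_triangle _ _ _
      _ < min (γ/2) η + γ/2 := add_lt_add hj0 h1
      _ ≤ γ := by linarith
  · -- n ≥ 2
    refine ⟨n - 1, by omega, fun i => if i = n - 1 then F.symm x else z i, ?_, ?_, ?_⟩
    · show (if (0:ℕ) = n - 1 then F.symm x else z 0) = x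
      rw [if_neg (by omega), hz0]
    · show (if n - 1 = n - 1 then F.symm x else z (n-1)) = F.symm x
      rw [if_pos rfl]
    · intro i hi
      have hin : i ≠ n - 1 := by omega
      show dist (F (if i = n - 1 then F.symm x else z i))
        (if i + 1 = n - 1 then F.symm x else z (i+1)) < γ
      rw [if_neg hin]
      by_cases h1 : i + 1 = n - 1
      · rw [if_pos h1]
        have hjlast := hj (n-1) (by omega)
        have hconv : n - 1 + 1 = n := by omega
        rw [hconv, hzn] at hjlast
        have h2' : dist (z (n-1)) (F.symm x) < γ/2 := by
          have := hmod (F (z (n-1))) x (lt_of_lt_of_le hjlast hminr)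
          rwa [Equiv.symm_apply_apply] at this
        have hji := hj i (by omega)
        rw [h1] at hji
        calc dist (F (z i)) (F.symm x) ≤ dist (F (z i)) (z (n-1)) + dist (z (n-1)) (F.symm x) :=
              dist_triangle _ _ _
          _ < min (γ/2) η + γ/2 := add_lt_add hji h2'
          _ ≤ γ := by linarith
      · rw [if_neg h1]
        exact lt_of_lt_of_le (hj i (by omega)) (by linarith)

lemma cr_apply (hF : Continuous (⇑F)) {x : X} (hx : ChainRecurrent F x) :
    ChainRecurrent F (F x) := by
  intro γ hγ
  show ChainFrom F γ (F x) (F x)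
  exact chain_concat F (chLE_F_self F hF hx γ hγ)
    (chain_single F (show dist (F x) (F x) < γ by rw [dist_self]; exact hγ))

lemma cr_symm_apply (hF' : Continuous (⇑F.symm)) {x : X} (hx : ChainRecurrent F x) :
    ChainRecurrent F (F.symm x) := by
  intro γ hγ
  show ChainFrom F γ (F.symm x) (F.symm x)
  refine chain_concat F (chain_single F ?_) (chLE_self_symm F hF' hx γ hγ)
  rw [Equiv.apply_symm_apply, dist_self]
  exact hγ

lemma chLE_trans {a b c : X} (h1 : ChLE F a b) (h2 : ChLE F b c) : ChLE F a c :=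
  fun γ hγ => chain_concat F (h1 γ hγ) (h2 γ hγ)

end Chains2

section Powers
variable {X : Type*} [MetricSpace X] [CompactSpace X] (F : Equiv.Perm X)

lemma symm_apply_zpow' (i : ℤ) (x : X) : F.symm ((F ^ i) x) = (F ^ (i - 1)) x := by
  have : F.symm ((F ^ i) x) = (F⁻¹ * F ^ i) x := rfl
  rw [this, ← zpow_neg_one, ← zpow_add, neg_add_eq_sub, sub_eq_add_neg, add_comm]

lemma cr_zpow (hF : Continuous (⇑F)) (hF' : Continuous (⇑F.symm)) {x : X}
    (hx : ChainRecurrent F x) (k : ℤ) : ChainRecurrent F ((F ^ k) x) := by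
  induction k using Int.induction_on with
  | zero => simpa using hx
  | succ n ih =>
    have := cr_apply F hF ih
    rwa [apply_zpow'] at this
  | pred n ih =>
    have := cr_symm_apply F hF' ih
    rw [symm_apply_zpow' F (-(n:ℤ)) x] at this
    exact this

lemma chLE_pow_self (hF : Continuous (⇑F)) (hF' : Continuous (⇑F.symm)) {x : X}
    (hx : ChainRecurrent F x) (k : ℕ) : ChLE F ((F ^ (k : ℤ)) x) x := by
  induction k with
  | zero => simpa using (show ChLE F x x from hx)
  | succ n ih =>
    have h1 : ChLE F (F ((F ^ (n : ℤ)) x)) ((F ^ (n : ℤ)) x) :=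
      chLE_F_self F hF (cr_zpow F hF hF' hx (n : ℤ))
    rw [apply_zpow'] at h1
    rw [show (((n+1 : ℕ)) : ℤ) = (n : ℤ) + 1 by push_cast; ring]
    exact chLE_trans F h1 ih

lemma chLE_self_negpow (hF : Continuous (⇑F)) (hF' : Continuous (⇑F.symm)) {x : X}
    (hx : ChainRecurrent F x) (k : ℕ) : ChLE F x ((F ^ (-(k : ℤ))) x) := by
  induction k with
  | zero => simpa using (show ChLE F x x from hx)
  | succ n ih =>
    have h1 : ChLE F ((F ^ (-(n : ℤ))) x) (F.symm ((F ^ (-(n : ℤ))) x)) :=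
      chLE_self_symm F hF' (cr_zpow F hF hF' hx (-(n : ℤ)))
    rw [symm_apply_zpow' F (-(n:ℤ)) x, show (-(n:ℤ) - 1) = -(((n+1:ℕ)):ℤ) by push_cast; ring] at h1
    exact chLE_trans F ih h1

end Powers

section Bridge
variable {X : Type*} [MetricSpace X] [CompactSpace X] (F : Equiv.Perm X)

/-- if `z` is in the ε-stable set of a chain recurrent point `x`, then there are chains
from `z` to `x` of arbitrary fineness -/
lemma chLE_of_ws (hF : Continuous (⇑F)) (hF' : Continuous (⇑F.symm))
    {c : ℝ} (hc : 0 < c) (hexp : Expansive F c) {ε : ℝ} (hεc : ε ≤ c)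
    {x z : X} (hz : z ∈ Ws F ε x) (hx : ChainRecurrent F x) : ChLE F z x := by
  intro γ hγ
  obtain ⟨Ns, hNs⟩ := ws_contraction F hF hF' hc hexp hεc hγ
  set N : ℕ := Ns + 2 with hN
  have c1 : ChainFrom F γ z ((F ^ (((N - 1 : ℕ)) : ℤ)) z) := by
    have := chain_orbit F hγ z 0 (N - 1) (by omega)
    rwa [zero_add, zpow_zero] at this
    -- (F ^ (0:ℤ)) z = z handled by zpow_zero? need app on point
  have c2 : ChainFrom F γ ((F ^ (((N - 1 : ℕ)) : ℤ)) z) ((F ^ ((N : ℕ) : ℤ)) x) := by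
    apply chain_single
    rw [apply_zpow', show (((N - 1 : ℕ) : ℤ) + 1) = ((N : ℕ) : ℤ) by push_cast; omega]
    rw [dist_comm]
    exact hNs x z hz N (by omega)
  have c3 := chLE_pow_self F hF hF' hx N γ hγ
  exact chain_concat F (chain_concat F c1 c2) c3

/-- if `z` is in the ε-unstable set of a chain recurrent point `y`, then there are chains
from `y` to `z` of arbitrary fineness -/
lemma chLE_of_wu (hF : Continuous (⇑F)) (hF' : Continuous (⇑F.symm))
    {c : ℝ} (hc : 0 < c) (hexp : Expansive F c) {ε : ℝ} (hεc : ε ≤ c)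
    {y z : X} (hz : z ∈ Wu F ε y) (hy : ChainRecurrent F y) : ChLE F y z := by
  intro γ hγ
  obtain ⟨Nu, hNu⟩ := wu_contraction F hF hF' hc hexp hεc hγ
  set M : ℕ := Nu + 2 with hM
  have c0 : ChainFrom F γ y ((F ^ (-(M : ℤ))) y) := chLE_self_negpow F hF hF' hy M γ hγ
  have c1 : ChainFrom F γ ((F ^ (-(M : ℤ))) y) ((F ^ (-((M - 1 : ℕ) : ℤ))) z) := by
    apply chain_single
    rw [apply_zpow', show (-(M : ℤ) + 1) = -((M - 1 : ℕ) : ℤ) by push_cast; omega]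
    exact hNu y z hz (M - 1) (by omega)
  have c2 : ChainFrom F γ ((F ^ (-((M - 1 : ℕ) : ℤ))) z) z := by
    have := chain_orbit F hγ z (-((M - 1 : ℕ) : ℤ)) (M - 1) (by omega)
    rwa [show (-((M - 1 : ℕ) : ℤ) + ((M - 1 : ℕ) : ℤ)) = 0 by ring, zpow_zero] at this
  exact chain_concat F (chain_concat F c0 c1) c2

end Bridge

section Shadow
variable {X : Type*} [MetricSpace X] [CompactSpace X] (F : Equiv.Perm X)

/-- finitely many steps of a fine pseudo-orbit stay close to the true orbit -/
lemma pseudo_orbit_close (hF : Continuous (⇑F)) (N : ℕ) {θ : ℝ} (hθ : 0 < θ) :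
    ∃ α > 0, α ≤ θ ∧ ∀ z : ℕ → X, (∀ i, i < N → dist (F (z i)) (z (i+1)) < α) →
      ∀ i ≤ N, dist ((F ^ (i : ℤ)) (z 0)) (z i) < θ := by
  induction N generalizing θ with
  | zero =>
    exact ⟨θ, hθ, le_refl θ, fun z _ i hi => by
      interval_cases i
      simpa using hθ⟩
  | succ n ih =>
    obtain ⟨η, hη, hmod⟩ := modulus' hF (half_pos hθ)
    have hθ' : 0 < min η (θ/2) := lt_min hη (half_pos hθ)
    obtain ⟨α, hα, hαθ', hind⟩ := ih hθ'
    refine ⟨α, hα, le_trans hαθ' (le_trans (min_le_right _ _) (by linarith)), fun z hz i hi => ?_⟩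
    rcases Nat.lt_or_ge i (n+1) with h | h
    · exact lt_of_lt_of_le (hind z (fun j hj => hz j (by omega)) i (by omega))
        (le_trans (min_le_right _ _) (by linarith))
    · have hieq : i = n + 1 := by omega
      subst hieq
      have h1 : dist ((F ^ ((n:ℕ) : ℤ)) (z 0)) (z n) < min η (θ/2) :=
        hind z (fun j hj => hz j (by omega)) n (by omega)
      have h2 : dist (F ((F ^ ((n:ℕ) : ℤ)) (z 0))) (F (z n)) < θ/2 :=
        hmod _ _ (lt_of_lt_of_le h1 (min_le_left _ _))
      rw [apply_zpow'] at h2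
      have h3 : dist (F (z n)) (z (n+1)) < α := hz n (by omega)
      calc dist ((F ^ ((n+1 : ℕ) : ℤ)) (z 0)) (z (n+1))
          ≤ dist ((F ^ ((n+1 : ℕ) : ℤ)) (z 0)) (F (z n)) + dist (F (z n)) (z (n+1)) :=
            dist_triangle _ _ _
        _ < θ/2 + θ/2 := by
            refine add_lt_add ?_ (lt_of_lt_of_le h3 (le_trans hαθ' (min_le_right _ _)))
            rw [show ((n+1 : ℕ) : ℤ) = (n : ℤ) + 1 by push_cast; ring]
            exact h2
        _ = θ := by ring

end Shadow

section Shadow2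
variable {X : Type*} [MetricSpace X] [CompactSpace X] (F : Equiv.Perm X)

lemma zpow_congr_apply {a b : ℤ} (h : a = b) (x : X) : (F ^ a) x = (F ^ b) x := by rw [h]

/-- the finite shadowing lemma -/
lemma shadowing [Nonempty X] (hF : Continuous (⇑F)) (hF' : Continuous (⇑F.symm))
    {c : ℝ} (hc : 0 < c) (hexp : Expansive F c) {ε₀ : ℝ} (hε₀ : 0 < ε₀)
    (hccs : ∀ ε : ℝ, 0 < ε → ε ≤ ε₀ → ∃ δ > 0, ∀ x y : X, dist x y < δ →
      ∃! z, z ∈ Ws F ε x ∩ Wu F ε y)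
    {Γ : ℝ} (hΓ : 0 < Γ) :
    ∃ α > 0, ∀ ζ : ℕ → X, (∀ t, dist (F (ζ t)) (ζ (t+1)) < α) →
      ∀ T : ℕ, ∃ w : X, ∀ t ≤ T, dist ((F ^ (t : ℤ)) w) (ζ t) < Γ := by
  set ε : ℝ := min (min ε₀ c) (Γ/4) with hε
  have hεpos : 0 < ε := lt_min (lt_min hε₀ hc) (by linarith)
  have hεε₀ : ε ≤ ε₀ := le_trans (min_le_left _ _) (min_le_left _ _)
  have hεc : ε ≤ c := le_trans (min_le_left _ _) (min_le_right _ _)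
  have hεΓ : ε ≤ Γ/4 := min_le_right _ _
  obtain ⟨δ₀, hδ₀, hbr⟩ := hccs ε hεpos hεε₀
  set δ : ℝ := min δ₀ ε with hδdef
  have hδpos : 0 < δ := lt_min hδ₀ hεpos
  obtain ⟨Ns, hNs⟩ := ws_contraction F hF hF' hc hexp hεc (half_pos hδpos)
  obtain ⟨Nu, hNu⟩ := wu_contraction F hF hF' hc hexp hεc (half_pos hεpos)
  set N : ℕ := max (max Ns Nu) 1 with hN
  have hN1 : 1 ≤ N := le_max_right _ _
  have hNNs : Ns ≤ N := le_trans (le_max_left _ _) (le_max_left _ _)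
  have hNNu : Nu ≤ N := le_trans (le_max_right _ _) (le_max_left _ _)
  have hθpos : 0 < min (Γ/4) (δ/2) := lt_min (by linarith) (half_pos hδpos)
  obtain ⟨α, hαpos, hαθ, hPO⟩ := pseudo_orbit_close F hF N hθpos
  -- bracket function
  have hbrf : ∀ p q : X, ∃ w, dist p q < δ → w ∈ Ws F ε p ∩ Wu F ε q := by
    intro p q
    by_cases h : dist p q < δ
    · exact ⟨(hbr p q (lt_of_lt_of_le h (min_le_left _ _))).exists.choose,
        fun _ => (hbr p q (lt_of_lt_of_le h (min_le_left _ _))).exists.choose_spec⟩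
    · exact ⟨Classical.arbitrary X, fun h' => absurd h' h⟩
  choose br hbrs using hbrf
  refine ⟨α, hαpos, fun ζ hζ T => ?_⟩
  -- the N-step block sequence
  set a : ℕ → X := fun k => ζ (k * N) with ha
  -- the pseudo-orbit property for blocks, and within blocks
  have hblock : ∀ k, ∀ i ≤ N, dist ((F ^ (i : ℤ)) (a k)) (ζ (k * N + i)) < min (Γ/4) (δ/2) := by
    intro k i hi
    have := hPO (fun j => ζ (k * N + j)) (fun j hj => hζ (k * N + j)) i hi
    simpa using this
  -- construct the bracketed sequence
  set x : ℕ → X := fun k => Nat.rec (a 0) (fun k xk => br (a (k+1)) ((F ^ (N : ℤ)) xk)) k with hx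
  have hx0 : x 0 = a 0 := rfl
  have hxs : ∀ k, x (k+1) = br (a (k+1)) ((F ^ (N : ℤ)) (x k)) := fun k => rfl
  -- x k stays in the stable set of a k
  have hdb : ∀ k, x k ∈ Ws F ε (a k) → dist (a (k+1)) ((F ^ (N : ℤ)) (x k)) < δ := by
    intro k hk
    have h1 : dist ((F ^ (N : ℤ)) (a k)) (ζ ((k+1) * N)) < δ/2 := by
      have := hblock k N (le_refl N)
      rw [show k * N + N = (k+1) * N by ring] at this
      exact lt_of_lt_of_le this (min_le_right _ _)
    have h2 : dist ((F ^ (N : ℤ)) (a k)) ((F ^ (N : ℤ)) (x k)) < δ/2 := hNs (a k) (x k) hk N hNNs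
    calc dist (a (k+1)) ((F ^ (N : ℤ)) (x k))
        ≤ dist (a (k+1)) ((F ^ (N : ℤ)) (a k)) + dist ((F ^ (N : ℤ)) (a k)) ((F ^ (N : ℤ)) (x k)) :=
          dist_triangle _ _ _
      _ < δ/2 + δ/2 := by
          refine add_lt_add ?_ h2
          rw [dist_comm]
          exact h1
      _ = δ := by ring
  have hws : ∀ k, x k ∈ Ws F ε (a k) := by
    intro k
    induction k with
    | zero => intro n; rw [hx0, dist_self]; exact hεpos
    | succ k ih =>
      have := (hbrs (a (k+1)) ((F ^ (N : ℤ)) (x k)) (hdb k ih)).1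
      rwa [hxs]
  have hwu : ∀ k, x (k+1) ∈ Wu F ε ((F ^ (N : ℤ)) (x k)) := by
    intro k
    have := (hbrs (a (k+1)) ((F ^ (N : ℤ)) (x k)) (hdb k (hws k))).2
    rwa [hxs]
  -- the number of blocks
  set m : ℕ := T / N + 1 with hm
  have hmT : T < m * N := by
    have h1 := Nat.div_add_mod T N
    have h2 : T % N < N := Nat.mod_lt _ (by omega)
    have h3 : m * N = N * (T / N) + N := by rw [hm]; ring
    omega
  -- the backwards tracking
  have hY : ∀ j k : ℕ, j + k = m → (F ^ (-(j : ℤ) * (N : ℤ))) (x m) ∈ Wu F ε (x k) := by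
    intro j
    induction j with
    | zero =>
      intro k hk
      have hkm : k = m := by omega
      subst hkm
      intro n
      have e : (F ^ (-((0:ℕ) : ℤ) * (N : ℤ))) (x m) = x m := by norm_num
      rw [e, dist_self]
      exact hεpos
    | succ j ih =>
      intro k hk
      have hkm : j + (k + 1) = m := by omega
      have hY1 := ih (k+1) hkm
      intro n
      -- the point to estimate: F^{-n} (F^{-(j+1)N} x m)
      have e1 : ((F ^ (-(n : ℤ))) ((F ^ (-((j+1 : ℕ) : ℤ) * (N : ℤ))) (x m)))
          = (F ^ (-((n + N : ℕ) : ℤ))) ((F ^ (-(j : ℤ) * (N : ℤ))) (x m)) := by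
        rw [zpow_apply_zpow, zpow_apply_zpow]
        exact zpow_congr_apply F (by push_cast; ring) _
      rw [e1]
      have t1 : dist ((F ^ (-((n + N : ℕ) : ℤ))) (x (k+1)))
          ((F ^ (-((n + N : ℕ) : ℤ))) ((F ^ (-(j : ℤ) * (N : ℤ))) (x m))) < ε/2 :=
        hNu (x (k+1)) _ hY1 (n + N) (by omega)
      have t2 : dist ((F ^ (-(n : ℤ))) (x k))
          ((F ^ (-((n + N : ℕ) : ℤ))) (x (k+1))) < ε/2 := by
        have h3 := hNu ((F ^ (N : ℤ)) (x k)) (x (k+1)) (hwu k) (n + N) (by omega)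
        have e2 : ((F ^ (-((n + N : ℕ) : ℤ))) ((F ^ (N : ℤ)) (x k))) = (F ^ (-(n : ℤ))) (x k) := by
          rw [zpow_apply_zpow]
          exact zpow_congr_apply F (by push_cast; ring) _
        rwa [e2] at h3
      calc dist ((F ^ (-(n : ℤ))) (x k)) ((F ^ (-((n + N : ℕ) : ℤ))) ((F ^ (-(j : ℤ) * (N : ℤ))) (x m)))
          ≤ dist ((F ^ (-(n : ℤ))) (x k)) ((F ^ (-((n + N : ℕ) : ℤ))) (x (k+1)))
            + dist ((F ^ (-((n + N : ℕ) : ℤ))) (x (k+1)))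
              ((F ^ (-((n + N : ℕ) : ℤ))) ((F ^ (-(j : ℤ) * (N : ℤ))) (x m))) := dist_triangle _ _ _
        _ < ε/2 + ε/2 := add_lt_add t2 t1
        _ = ε := by ring
  -- the shadowing point
  refine ⟨(F ^ (-(m : ℤ) * (N : ℤ))) (x m), ?_⟩
  intro t ht
  set k : ℕ := t / N with hk
  set i : ℕ := t % N with hi
  have hti : t = k * N + i := by
    have h := Nat.div_add_mod t N
    rw [mul_comm] at h
    exact h.symm
  have hiN : i < N := Nat.mod_lt _ (by omega)
  have hkm : k < m := by
    have h1 : t < m * N := lt_of_le_of_lt ht hmT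
    rw [hk]
    exact Nat.div_lt_of_lt_mul (by rw [mul_comm]; exact h1)
  -- term 1 : dist (F^t w) (F^i (x k)) < 2ε
  have hterm1 : dist ((F ^ (t : ℤ)) ((F ^ (-(m : ℤ) * (N : ℤ))) (x m))) ((F ^ (i : ℤ)) (x k)) < 2*ε := by
    rcases Nat.eq_zero_or_pos i with hi0 | hipos
    · -- i = 0
      have e3 : ((F ^ (t : ℤ)) ((F ^ (-(m : ℤ) * (N : ℤ))) (x m)))
          = (F ^ (-(0 : ℤ))) ((F ^ (-((m - k : ℕ) : ℤ) * (N : ℤ))) (x m)) := by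
        rw [zpow_apply_zpow, zpow_apply_zpow]
        refine zpow_congr_apply F ?_ _
        have h4 : (t : ℤ) = (k : ℤ) * (N : ℤ) := by push_cast [hti, hi0]; ring
        have h5 : ((m - k : ℕ) : ℤ) = (m : ℤ) - (k : ℤ) := by push_cast [Nat.cast_sub (le_of_lt hkm)]; ring
        rw [h4, h5]; ring
      rw [e3]
      have := hY (m - k) k (by omega) 0
      rw [dist_comm] at this
      calc dist ((F ^ (-(0:ℤ))) ((F ^ (-((m - k : ℕ) : ℤ) * (N : ℤ))) (x m))) ((F ^ ((i:ℕ) : ℤ)) (x k))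
          = dist ((F ^ (-((0:ℕ):ℤ))) ((F ^ (-((m - k : ℕ) : ℤ) * (N : ℤ))) (x m))) ((F ^ (-((0:ℕ):ℤ))) (x k)) := by
            rw [zpow_congr_apply F (show ((i:ℕ):ℤ) = -((0:ℕ):ℤ) by simp [hi0]) (x k)]
            norm_num
        _ < ε := this
        _ ≤ 2*ε := by linarith
    · -- i ≥ 1, use k+1 ≤ m
      have e4 : ((F ^ (t : ℤ)) ((F ^ (-(m : ℤ) * (N : ℤ))) (x m)))
          = (F ^ (-((N - i : ℕ) : ℤ))) ((F ^ (-((m - (k+1) : ℕ) : ℤ) * (N : ℤ))) (x m)) := by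
        rw [zpow_apply_zpow, zpow_apply_zpow]
        refine zpow_congr_apply F ?_ _
        have h4 : (t : ℤ) = (k : ℤ) * (N : ℤ) + (i : ℤ) := by push_cast [hti]; ring
        have h5 : ((m - (k+1) : ℕ) : ℤ) = (m : ℤ) - (k : ℤ) - 1 := by
          push_cast [Nat.cast_sub (by omega : k + 1 ≤ m)]; ring
        have h6 : ((N - i : ℕ) : ℤ) = (N : ℤ) - (i : ℤ) := by
          push_cast [Nat.cast_sub (le_of_lt hiN)]; ring
        rw [h4, h5, h6]; ring
      rw [e4]
      have hYk1 := hY (m - (k+1)) (k+1) (by omega) (N - i)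
      have s2 : dist ((F ^ (-((N - i : ℕ) : ℤ))) ((F ^ ((N:ℕ) : ℤ)) (x k)))
          ((F ^ (-((N - i : ℕ) : ℤ))) (x (k+1))) < ε := hwu k (N - i)
      have e5 : ((F ^ (-((N - i : ℕ) : ℤ))) ((F ^ ((N:ℕ) : ℤ)) (x k))) = (F ^ ((i:ℕ) : ℤ)) (x k) := by
        rw [zpow_apply_zpow]
        refine zpow_congr_apply F ?_ _
        have h6 : ((N - i : ℕ) : ℤ) = (N : ℤ) - (i : ℤ) := by
          push_cast [Nat.cast_sub (le_of_lt hiN)]; ring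
        rw [h6]; ring
      rw [e5] at s2
      calc dist ((F ^ (-((N - i : ℕ) : ℤ))) ((F ^ (-((m - (k+1) : ℕ) : ℤ) * (N : ℤ))) (x m))) ((F ^ ((i:ℕ) : ℤ)) (x k))
          ≤ dist ((F ^ (-((N - i : ℕ) : ℤ))) ((F ^ (-((m - (k+1) : ℕ) : ℤ) * (N : ℤ))) (x m)))
              ((F ^ (-((N - i : ℕ) : ℤ))) (x (k+1)))
            + dist ((F ^ (-((N - i : ℕ) : ℤ))) (x (k+1))) ((F ^ ((i:ℕ) : ℤ)) (x k)) := dist_triangle _ _ _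
        _ < ε + ε := by
            refine add_lt_add ?_ ?_
            · rw [dist_comm]; exact hYk1
            · rw [dist_comm]; exact s2
        _ = 2*ε := by ring
  -- term 2
  have hterm2 : dist ((F ^ (i : ℤ)) (x k)) ((F ^ (i : ℤ)) (a k)) < ε := by
    rw [dist_comm]
    exact hws k i
  -- term 3
  have hterm3 : dist ((F ^ (i : ℤ)) (a k)) (ζ t) < Γ/4 := by
    have := hblock k i (le_of_lt hiN)
    rw [← hti] at this
    exact lt_of_lt_of_le this (min_le_left _ _)
  calc dist ((F ^ (t : ℤ)) ((F ^ (-(m : ℤ) * (N : ℤ))) (x m))) (ζ t)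
      ≤ dist ((F ^ (t : ℤ)) ((F ^ (-(m : ℤ) * (N : ℤ))) (x m))) ((F ^ (i : ℤ)) (x k))
        + dist ((F ^ (i : ℤ)) (x k)) ((F ^ (i : ℤ)) (a k))
        + dist ((F ^ (i : ℤ)) (a k)) (ζ t) := dist_triangle4 _ _ _ _
    _ < 2*ε + ε + Γ/4 := by
        refine add_lt_add (add_lt_add hterm1 hterm2) hterm3
    _ ≤ Γ := by linarith

end Shadow2

section Shadow3
variable {X : Type*} [MetricSpace X] [CompactSpace X] (F : Equiv.Perm X)

lemma periodic_mod {P : ℕ} (hP : 0 < P) (ζ : ℕ → X) (hper : ∀ t, ζ (t + P) = ζ t) :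
    ∀ n, ζ n = ζ (n % P) := by
  intro n
  induction n using Nat.strong_induction_on with
  | _ n ih =>
    rcases Nat.lt_or_ge n P with h | h
    · rw [Nat.mod_eq_of_lt h]
    · have h1 : n = (n - P) + P := by omega
      have h2 : ζ n = ζ (n - P) := by conv_lhs => rw [h1, hper]
      rw [h2, ih (n - P) (by omega)]
      congr 1
      exact (Nat.mod_eq_sub_mod h).symm

/-- shadowing of periodic pseudo-orbits by periodic points -/
lemma periodic_shadowing [Nonempty X] (hF : Continuous (⇑F)) (hF' : Continuous (⇑F.symm))
    {c : ℝ} (hc : 0 < c) (hexp : Expansive F c) {ε₀ : ℝ} (hε₀ : 0 < ε₀)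
    (hccs : ∀ ε : ℝ, 0 < ε → ε ≤ ε₀ → ∃ δ > 0, ∀ x y : X, dist x y < δ →
      ∃! z, z ∈ Ws F ε x ∩ Wu F ε y)
    {Γ : ℝ} (hΓ : 0 < Γ) (hΓc : 2*Γ ≤ c) :
    ∃ α > 0, ∀ P : ℕ, 0 < P → ∀ ζ : ℕ → X, (∀ t, ζ (t + P) = ζ t) →
      (∀ t, dist (F (ζ t)) (ζ (t+1)) < α) →
      ∃ p : X, (F ^ (P : ℤ)) p = p ∧ ∀ t : ℕ, dist ((F ^ (t : ℤ)) p) (ζ t) ≤ Γ := by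
  obtain ⟨α, hαpos, hsh⟩ := shadowing F hF hF' hc hexp hε₀ hccs hΓ
  refine ⟨α, hαpos, fun P hP ζ hper hch => ?_⟩
  -- finite shadows
  have hW : ∀ L : ℕ, ∃ w : X, ∀ t ≤ 2*L*P, dist ((F ^ (t : ℤ)) w) (ζ t) < Γ :=
    fun L => hsh ζ hch (2*L*P)
  choose w hw using hW
  set u : ℕ → X := fun L => (F ^ ((L*P : ℕ) : ℤ)) (w L) with hu
  obtain ⟨p, -, φ, hφ, hconv⟩ := isCompact_univ.tendsto_subseq (fun L => mem_univ (u L))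
  -- the key bi-infinite estimate
  have hkey : ∀ s : ℤ, dist ((F ^ s) p) (ζ ((s % (P : ℤ)).toNat)) ≤ Γ := by
    intro s
    have hest : ∀ L : ℕ, s.natAbs ≤ L →
        dist ((F ^ s) (u L)) (ζ ((s % (P : ℤ)).toNat)) < Γ := by
      intro L hL
      have hLP : s.natAbs ≤ L * P := le_trans hL (Nat.le_mul_of_pos_right L hP)
      have hLPz : (s.natAbs : ℤ) ≤ ((L*P : ℕ) : ℤ) := by exact_mod_cast hLP
      have ht0 : (0 : ℤ) ≤ (L*P : ℕ) + s := by omega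
      set t : ℕ := (((L*P : ℕ) : ℤ) + s).toNat with htdef
      have htz : (t : ℤ) = ((L*P : ℕ) : ℤ) + s := by omega
      have htle : t ≤ 2*L*P := by
        have h2 : ((2*L*P : ℕ) : ℤ) = 2 * ((L*P : ℕ) : ℤ) := by push_cast; ring
        omega
      have e1 : (F ^ s) (u L) = (F ^ (t : ℤ)) (w L) := by
        rw [hu]
        show (F ^ s) ((F ^ ((L*P : ℕ) : ℤ)) (w L)) = _
        rw [zpow_apply_zpow]
        exact zpow_congr_apply F (by omega) _
      have e2 : ζ t = ζ ((s % (P : ℤ)).toNat) := by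
        rw [periodic_mod hP ζ hper t]
        congr 1
        have h3 : ((t % P : ℕ) : ℤ) = (t : ℤ) % (P : ℤ) := Int.natCast_mod t P
        have h4 : (t : ℤ) % (P : ℤ) = s % (P : ℤ) := by
          rw [htz]
          push_cast
          rw [add_comm]
          exact Int.add_mul_emod_self_right _ _ _
        omega
      rw [e1, ← e2]
      exact hw L t htle
    have hcont : Filter.Tendsto (fun j => dist ((F ^ s) (u (φ j))) (ζ ((s % (P : ℤ)).toNat)))
        Filter.atTop (nhds (dist ((F ^ s) p) (ζ ((s % (P : ℤ)).toNat)))) := by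
      have h5 : Filter.Tendsto (fun j => (F ^ s) (u (φ j))) Filter.atTop (nhds ((F ^ s) p)) :=
        ((cont_zpow F hF hF' s).continuousAt.tendsto.comp hconv)
      exact (Continuous.dist continuous_id continuous_const).continuousAt.tendsto.comp h5
    refine le_of_tendsto hcont ?_
    filter_upwards [Filter.eventually_atTop.2 ⟨s.natAbs, fun j hj => hj⟩] with j hj
    exact le_of_lt (hest (φ j) (le_trans hj (StrictMono.le_apply hφ)))
  -- periodicity
  have hq : ∀ s : ℤ, dist ((F ^ s) ((F ^ (P : ℤ)) p)) (ζ ((s % (P : ℤ)).toNat)) ≤ Γ := by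
    intro s
    have e3 : (F ^ s) ((F ^ (P : ℤ)) p) = (F ^ (s + (P : ℤ))) p := zpow_apply_zpow F s (P:ℤ) p
    have e4 : (s + (P : ℤ)) % (P : ℤ) = s % (P : ℤ) := by
      have := Int.add_mul_emod_self_right s 1 (P : ℤ)
      simpa using this
    rw [e3, ← e4]
    exact hkey (s + (P : ℤ))
  have hpq : (F ^ (P : ℤ)) p = p := by
    by_contra hne
    obtain ⟨n, hn⟩ := hexp _ _ (Ne.symm hne)
    have h6 := hkey n
    have h7 := hq n
    have : dist ((F ^ n) p) ((F ^ n) ((F ^ (P : ℤ)) p)) ≤ 2*Γ := by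
      calc dist ((F ^ n) p) ((F ^ n) ((F ^ (P : ℤ)) p))
          ≤ dist ((F ^ n) p) (ζ ((n % (P : ℤ)).toNat))
            + dist ((F ^ n) ((F ^ (P : ℤ)) p)) (ζ ((n % (P : ℤ)).toNat)) :=
            dist_triangle_right _ _ _
        _ ≤ Γ + Γ := add_le_add h6 h7
        _ = 2*Γ := by ring
    linarith
  refine ⟨p, hpq, fun t => ?_⟩
  have h8 := hkey (t : ℤ)
  have e5 : (((t : ℤ) % (P : ℤ)).toNat) = t % P := by
    have h3 : ((t % P : ℕ) : ℤ) = (t : ℤ) % (P : ℤ) := Int.natCast_mod t P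
    omega
  rw [e5] at h8
  rw [periodic_mod hP ζ hper t]
  exact h8

end Shadow3

section Classes
variable {X : Type*} [MetricSpace X] [CompactSpace X] (F : Equiv.Perm X)

lemma chain_mono {γ γ' : ℝ} (h : γ ≤ γ') {a b : X} (hab : ChainFrom F γ a b) :
    ChainFrom F γ' a b := by
  obtain ⟨n, hn, z, h0, hZ, hj⟩ := hab
  exact ⟨n, hn, z, h0, hZ, fun i hi => lt_of_lt_of_le (hj i hi) h⟩

lemma Ws_mono {ε ε' : ℝ} (h : ε ≤ ε') (x : X) : Ws F ε x ⊆ Ws F ε' x :=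
  fun y hy n => lt_of_lt_of_le (hy n) h

lemma Wu_mono {ε ε' : ℝ} (h : ε ≤ ε') (x : X) : Wu F ε x ⊆ Wu F ε' x :=
  fun y hy n => lt_of_lt_of_le (hy n) h

lemma cr_of_periodic {p : X} {P : ℕ} (hP : 0 < P) (hp : (F ^ (P : ℤ)) p = p) :
    ChainRecurrent F p := by
  intro γ hγ
  show ChainFrom F γ p p
  have := chain_orbit F hγ p 0 P hP
  rwa [zpow_zero, show ((1 : Equiv.Perm X) p) = p from rfl, zero_add, hp] at this

lemma chLE_self_F (y : X) : ChLE F y (F y) :=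
  fun γ hγ => chain_single F (by rw [dist_self]; exact hγ)

lemma chLE_symm_self (y : X) : ChLE F (F.symm y) y :=
  fun γ hγ => chain_single F (by rw [Equiv.apply_symm_apply, dist_self]; exact hγ)

/-- the chain equivalence relation -/
def ChRel (x y : X) : Prop := ChLE F x y ∧ ChLE F y x

lemma rel_refl {x : X} (hx : ChainRecurrent F x) : ChRel F x x := ⟨hx, hx⟩

lemma rel_symm {x y : X} (h : ChRel F x y) : ChRel F y x := ⟨h.2, h.1⟩

lemma rel_trans {x y z : X} (h1 : ChRel F x y) (h2 : ChRel F y z) : ChRel F x z :=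
  ⟨chLE_trans F h1.1 h2.1, chLE_trans F h2.2 h1.2⟩

/-- the chain component of `x` -/
def cls (x : X) : Set X := {y | ChainRecurrent F y ∧ ChRel F x y}

lemma cls_eq_of_rel {x y : X} (h : ChRel F x y) : cls F x = cls F y := by
  ext w
  exact ⟨fun hw => ⟨hw.1, rel_trans F (rel_symm F h) hw.2⟩,
    fun hw => ⟨hw.1, rel_trans F h hw.2⟩⟩

lemma cls_eq_of_inter {x y : X} (h : (cls F x ∩ cls F y).Nonempty) : cls F x = cls F y := by
  obtain ⟨w, hwx, hwy⟩ := h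
  rw [cls_eq_of_rel F hwx.2, cls_eq_of_rel F hwy.2]

/-- chain recurrent points at small distance are chain equivalent -/
lemma claimA (hF : Continuous (⇑F)) (hF' : Continuous (⇑F.symm))
    {c : ℝ} (hc : 0 < c) (hexp : Expansive F c) {ε₁ : ℝ} (hε₁c : ε₁ ≤ c) {δ' : ℝ}
    (hbr : ∀ x y : X, dist x y < δ' → ∃! z, z ∈ Ws F ε₁ x ∩ Wu F ε₁ y)
    {x y : X} (hx : ChainRecurrent F x) (hy : ChainRecurrent F y)
    (hxy : dist x y < δ') : ChRel F x y := by
  obtain ⟨z, hz, -⟩ := hbr x y hxy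
  obtain ⟨z', hz', -⟩ := hbr y x (by rwa [dist_comm])
  constructor
  · -- chains from x to y, via z' ∈ Ws ε₁ y ∩ Wu ε₁ x
    exact chLE_trans F (chLE_of_wu F hF hF' hc hexp hε₁c hz'.2 hx)
      (chLE_of_ws F hF hF' hc hexp hε₁c hz'.1 hy)
  · exact chLE_trans F (chLE_of_wu F hF hF' hc hexp hε₁c hz.2 hy)
      (chLE_of_ws F hF hF' hc hexp hε₁c hz.1 hx)

/-- the chain recurrent set is closed -/
lemma cr_closed (hF : Continuous (⇑F)) : IsClosed {x : X | ChainRecurrent F x} := by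
  rw [← closure_subset_iff_isClosed]
  intro x hx
  intro γ hγ
  show ChainFrom F γ x x
  obtain ⟨η, hη, hmod⟩ := modulus' hF (show (0:ℝ) < γ/4 by linarith)
  have hρ : 0 < min (γ/4) η := lt_min (by linarith) hη
  obtain ⟨x', hx', hd⟩ := Metric.mem_closure_iff.1 hx _ hρ
  have hC : ChainFrom F (γ/4) x' x' := hx' (γ/4) (by linarith)
  have h1 : ChainFrom F (γ/4 + γ/4) x x' :=
    chain_head F hC (hmod _ _ (lt_of_lt_of_le hd (min_le_right _ _)))
  have h2 : ChainFrom F (γ/4 + γ/4 + γ/4) x x :=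
    chain_tail F h1 (by rw [dist_comm]; exact lt_of_lt_of_le hd (min_le_left _ _))
  exact chain_mono F (by linarith) h2

/-- chain components are closed -/
lemma cls_closed (hF : Continuous (⇑F)) (hF' : Continuous (⇑F.symm))
    {c : ℝ} (hc : 0 < c) (hexp : Expansive F c) {ε₁ : ℝ} (hε₁c : ε₁ ≤ c) {δ' : ℝ} (hδ' : 0 < δ')
    (hbr : ∀ x y : X, dist x y < δ' → ∃! z, z ∈ Ws F ε₁ x ∩ Wu F ε₁ y)
    (x : X) : IsClosed (cls F x) := by
  rw [← closure_subset_iff_isClosed]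
  intro w hw
  have hwR : ChainRecurrent F w := by
    have h1 : closure (cls F x) ⊆ closure {p : X | ChainRecurrent F p} :=
      closure_mono (fun p hp => hp.1)
    have := h1 hw
    rwa [(cr_closed F hF).closure_eq] at this
  obtain ⟨b, hb, hdb⟩ := Metric.mem_closure_iff.1 hw _ hδ'
  have hrel : ChRel F w b := claimA F hF hF' hc hexp hε₁c hbr hwR hb.1 hdb
  exact ⟨hwR, rel_trans F hb.2 (rel_symm F hrel)⟩

/-- chain components are invariant -/
lemma cls_inv (hF : Continuous (⇑F)) (hF' : Continuous (⇑F.symm)) (x : X) :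
    (⇑F) '' (cls F x) = cls F x := by
  apply Subset.antisymm
  · rintro - ⟨y, hy, rfl⟩
    refine ⟨cr_apply F hF hy.1, ?_, ?_⟩
    · exact chLE_trans F hy.2.1 (chLE_self_F F y)
    · exact chLE_trans F (chLE_F_self F hF hy.1) hy.2.2
  · intro y hy
    refine ⟨F.symm y, ⟨cr_symm_apply F hF' hy.1, ?_, ?_⟩, Equiv.apply_symm_apply F y⟩
    · exact chLE_trans F hy.2.1 (chLE_self_symm F hF' hy.1)
    · exact chLE_trans F (chLE_symm_self F y) hy.2.2

end Classes

section PerClass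
variable {X : Type*} [MetricSpace X] [CompactSpace X] (F : Equiv.Perm X)

/-- each chain component is a Smale space -/
lemma smale_on_cls (hF : Continuous (⇑F)) (hF' : Continuous (⇑F.symm))
    {c : ℝ} (hc : 0 < c) (hexp : Expansive F c) {ε₀ : ℝ} (hε₀ : 0 < ε₀)
    (hccs : ∀ ε : ℝ, 0 < ε → ε ≤ ε₀ → ∃ δ > 0, ∀ x y : X, dist x y < δ →
      ∃! z, z ∈ Ws F ε x ∩ Wu F ε y)
    {δ' : ℝ} (hδ' : 0 < δ') (hδε : δ' ≤ min ε₀ c)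
    (hbr : ∀ x y : X, dist x y < δ' → ∃! z, z ∈ Ws F (min ε₀ c) x ∩ Wu F (min ε₀ c) y)
    (x₀ : X) : IsSmaleOnSet F (cls F x₀) := by
  have hε₁pos : 0 < min ε₀ c := lt_min hε₀ hc
  have hε₁c : min ε₀ c ≤ c := min_le_right _ _
  constructor
  · exact ⟨c, hc, fun p _ q _ hne => hexp p q hne⟩
  · refine ⟨min ε₀ c, hε₁pos, fun ε hε hεε₁ => ?_⟩
    obtain ⟨δc, hδc, hcc⟩ := hccs ε hε (le_trans hεε₁ (min_le_left _ _))
    refine ⟨min δc δ', lt_min hδc hδ', fun x hx y hy hxy => ?_⟩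
    obtain ⟨z, hz, hzu⟩ := hcc x y (lt_of_lt_of_le hxy (min_le_left _ _))
    have hzs : z ∈ Ws F (min ε₀ c) x := Ws_mono F hεε₁ x hz.1
    have hzuu : z ∈ Wu F (min ε₀ c) y := Wu_mono F hεε₁ y hz.2
    -- x and y are chain equivalent
    have hxyR : ChRel F x y := rel_trans F (rel_symm F hx.2) hy.2
    -- chains involving z
    have hzx : ChLE F z x := chLE_of_ws F hF hF' hc hexp hε₁c hzs hx.1
    have hyz : ChLE F y z := chLE_of_wu F hF hF' hc hexp hε₁c hzuu hy.1
    have hxz : ChLE F x z := chLE_trans F hxyR.1 hyz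
    have hzR : ChainRecurrent F z := chLE_trans F hzx hxz
    have hzcls : z ∈ cls F x₀ := by
      refine ⟨hzR, ?_, ?_⟩
      · exact chLE_trans F hx.2.1 hxz
      · exact chLE_trans F hzx hx.2.2
    refine ⟨z, ⟨⟨hzcls, hz.1⟩, hz.2⟩, ?_⟩
    rintro z' ⟨⟨-, hz's⟩, hz'u⟩
    exact hzu z' ⟨hz's, hz'u⟩

/-- concatenation with an explicit milestone -/
lemma chain_concat_explicit {γ : ℝ} {a b c : X} (h1 : ChainFrom F γ a b)
    (h2 : ChainFrom F γ b c) :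
    ∃ (n₁ n₂ : ℕ) (w : ℕ → X), 0 < n₁ ∧ 0 < n₂ ∧ w 0 = a ∧ w n₁ = b ∧ w (n₁ + n₂) = c ∧
      ∀ j < n₁ + n₂, dist (F (w j)) (w (j + 1)) < γ := by
  obtain ⟨n, hn, z, hz0, hzn, hj⟩ := h1
  obtain ⟨n', hn', z', hz0', hzn', hj'⟩ := h2
  refine ⟨n, n', fun i => if i < n then z i else z' (i - n), hn, hn', ?_, ?_, ?_, ?_⟩
  · simp [hn, hz0]
  · show (if n < n then z n else z' (n - n)) = b
    rw [if_neg (lt_irrefl n), Nat.sub_self, hz0']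
  · have : ¬ (n + n' < n) := by omega
    simp [this, hzn']
  · intro i hi
    by_cases h : i < n
    · by_cases h2 : i + 1 < n
      · simpa [h, h2] using hj i h
      · have hin : i + 1 = n := by omega
        have : ¬ (i + 1 < n) := by omega
        simp only [h, this, if_true, if_false]
        have e : i + 1 - n = 0 := by omega
        rw [e, hz0', ← hzn, ← hin]
        exact hj i h
    · have h3 : ¬ (i + 1 < n) := by omega
      simp only [h, h3, if_false]
      have : i + 1 - n = (i - n) + 1 := by omega
      rw [this]
      exact hj' (i - n) (by omega)

/-- each chain component is topologically transitive -/
lemma trans_on_cls [Nonempty X] (hF : Continuous (⇑F)) (hF' : Continuous (⇑F.symm))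
    {c : ℝ} (hc : 0 < c) (hexp : Expansive F c) {ε₀ : ℝ} (hε₀ : 0 < ε₀)
    (hccs : ∀ ε : ℝ, 0 < ε → ε ≤ ε₀ → ∃ δ > 0, ∀ x y : X, dist x y < δ →
      ∃! z, z ∈ Ws F ε x ∩ Wu F ε y)
    {δ' : ℝ} (hδ' : 0 < δ') (hδε : δ' ≤ min ε₀ c)
    (hbr : ∀ x y : X, dist x y < δ' → ∃! z, z ∈ Ws F (min ε₀ c) x ∩ Wu F (min ε₀ c) y)
    (x₀ : X) : TransitiveOnSet F (cls F x₀) := by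
  have hε₁c : min ε₀ c ≤ c := min_le_right _ _
  intro U V hU hV hUne hVne
  obtain ⟨u, huU, hucls⟩ := hUne
  obtain ⟨v, hvV, hvcls⟩ := hVne
  obtain ⟨ru, hru, hbu⟩ := Metric.isOpen_iff.1 hU u huU
  obtain ⟨rv, hrv, hbv⟩ := Metric.isOpen_iff.1 hV v hvV
  set Γ : ℝ := (min (min ru rv) (min δ' c)) / 2 with hΓdef
  have hΓpos : 0 < Γ := by
    have := lt_min (lt_min hru hrv) (lt_min hδ' hc)
    rw [hΓdef]
    linarith
  have hΓc : 2 * Γ ≤ c := by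
    have h1 : min (min ru rv) (min δ' c) ≤ c := le_trans (min_le_right _ _) (min_le_right _ _)
    rw [hΓdef]; linarith
  have hΓδ : Γ < δ' := by
    have h1 : min (min ru rv) (min δ' c) ≤ δ' := le_trans (min_le_right _ _) (min_le_left _ _)
    rw [hΓdef]; linarith
  have hΓru : Γ < ru := by
    have h1 : min (min ru rv) (min δ' c) ≤ ru := le_trans (min_le_left _ _) (min_le_left _ _)
    rw [hΓdef]; linarith
  have hΓrv : Γ < rv := by
    have h1 : min (min ru rv) (min δ' c) ≤ rv := le_trans (min_le_left _ _) (min_le_right _ _)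
    rw [hΓdef]; linarith
  obtain ⟨α, hαpos, hpsh⟩ := periodic_shadowing F hF hF' hc hexp hε₀ hccs hΓpos hΓc
  -- u and v are chain equivalent
  have huv : ChRel F u v := rel_trans F (rel_symm F hucls.2) hvcls.2
  -- build the periodic pseudo-orbit through v then u then back to v
  obtain ⟨n₁, n₂, w, hn₁, hn₂, hw0, hwn₁, hwP, hwj⟩ :=
    chain_concat_explicit F (huv.2 α hαpos) (huv.1 α hαpos)
  set P : ℕ := n₁ + n₂ with hPdef
  have hP : 0 < P := by omega
  set ζ : ℕ → X := fun t => w (t % P) with hζdef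
  have hper : ∀ t, ζ (t + P) = ζ t := by
    intro t
    show w ((t + P) % P) = w (t % P)
    rw [Nat.add_mod_right]
  have hP2 : 2 ≤ P := by omega
  have hch : ∀ t, dist (F (ζ t)) (ζ (t+1)) < α := by
    intro t
    show dist (F (w (t % P))) (w ((t+1) % P)) < α
    have hr : t % P < P := Nat.mod_lt _ hP
    have hmod1 : 1 % P = 1 := Nat.mod_eq_of_lt (by omega)
    have hadd : (t + 1) % P = (t % P + 1) % P := by
      rw [Nat.add_mod, hmod1]
    by_cases h : t % P + 1 < P
    · have e : (t+1) % P = t % P + 1 := by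
        rw [hadd, Nat.mod_eq_of_lt h]
      rw [e]
      exact hwj _ (by omega)
    · have hrP : t % P + 1 = P := by omega
      have e : (t+1) % P = 0 := by
        rw [hadd, hrP, Nat.mod_self]
      rw [e, hw0, ← hwP]
      have := hwj (t % P) (by omega)
      rwa [hrP] at this
  obtain ⟨p, hpper, hpsh'⟩ := hpsh P hP ζ hper hch
  -- p is in the class
  have hpcr : ChainRecurrent F p := cr_of_periodic F hP hpper
  have hpv : dist p v ≤ Γ := by
    have := hpsh' 0
    have e : ζ 0 = v := by
      show w (0 % P) = v
      rw [Nat.zero_mod, hw0]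
    rw [← e]
    simpa using this
  have hpcls : p ∈ cls F x₀ := by
    have hrel : ChRel F v p :=
      claimA F hF hF' hc hexp hε₁c hbr hvcls.1 hpcr
        (by rw [dist_comm]; exact lt_of_le_of_lt hpv hΓδ)
    exact ⟨hpcr, rel_trans F hvcls.2 hrel⟩
  refine ⟨n₁, p, ⟨?_, ?_⟩, hpcls⟩
  · -- F^{n₁} p ∈ U
    show (F ^ ((n₁ : ℕ) : ℤ)) p ∈ U
    apply hbu
    have := hpsh' n₁
    have e : ζ n₁ = u := by
      show w (n₁ % P) = u
      rw [Nat.mod_eq_of_lt (by omega), hwn₁]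
    rw [e] at this
    exact lt_of_le_of_lt this hΓru
  · -- p ∈ V
    apply hbv
    exact lt_of_le_of_lt hpv hΓrv

end PerClass

/-- Spectral decomposition: the chain recurrent set of a Smale space is a
finite disjoint union of compact invariant sets on each of which the map is a transitive
Smale space. -/
theorem stmt17 {X : Type*} [MetricSpace X] [CompactSpace X] (F : Equiv.Perm X)
    (hX : IsSmale F) :
    ∃ (l : ℕ) (B : Fin l → Set X),
      (∀ i, IsCompact (B i)) ∧
      (∀ i, (⇑F) '' B i = B i) ∧
      (∀ i j, i ≠ j → Disjoint (B i) (B j)) ∧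
      {x | ChainRecurrent F x} = ⋃ i, B i ∧
      (∀ i, TransitiveOnSet F (B i)) ∧
      (∀ i, IsSmaleOnSet F (B i)) := by
  obtain ⟨hF, hF', ⟨c, hc, hexp⟩, ε₀, hε₀, hccs⟩ := hX
  rcases isEmpty_or_nonempty X with hE | hNE
  · -- the degenerate case of an empty space
    refine ⟨0, fun _ => (∅ : Set X), fun i => i.elim0, fun i => i.elim0, fun i => i.elim0,
      ?_, fun i => i.elim0, fun i => i.elim0⟩
    ext x
    exact isEmptyElim x
  -- main case
  have hε₁pos : 0 < min ε₀ c := lt_min hε₀ hc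
  have hε₁c : min ε₀ c ≤ c := min_le_right _ _
  obtain ⟨δ₀, hδ₀, hbr0⟩ := hccs (min ε₀ c) hε₁pos (min_le_left _ _)
  set δ' : ℝ := min δ₀ (min ε₀ c) with hδ'def
  have hδ'pos : 0 < δ' := lt_min hδ₀ hε₁pos
  have hδ'ε : δ' ≤ min ε₀ c := min_le_right _ _
  have hbr : ∀ x y : X, dist x y < δ' → ∃! z, z ∈ Ws F (min ε₀ c) x ∩ Wu F (min ε₀ c) y :=
    fun x y h => hbr0 x y (lt_of_lt_of_le h (min_le_left _ _))
  set R : Set X := {x | ChainRecurrent F x} with hRdef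
  have hRclosed : IsClosed R := cr_closed F hF
  have hRcompact : IsCompact R := hRclosed.isCompact
  -- finitely many chain components
  obtain ⟨T, hTsub, hTfin, hTcover⟩ := hRcompact.finite_cover_balls (half_pos hδ'pos)
  set S : Set (Set X) := (cls F) '' R with hSdef
  have hSsub : S ⊆ (cls F) '' T := by
    rintro - ⟨x, hxR, rfl⟩
    obtain ⟨t, htT, hxt⟩ := mem_iUnion₂.1 (hTcover hxR)
    have htR : t ∈ R := hTsub htT
    have hrel : ChRel F t x :=
      claimA F hF hF' hc hexp hε₁c hbr htR hxR
        (by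
          have hd : dist x t < δ'/2 := Metric.mem_ball.1 hxt
          rw [dist_comm]
          linarith)
    exact ⟨t, htT, cls_eq_of_rel F hrel⟩
  have hSfin : S.Finite := Set.Finite.subset (hTfin.image _) hSsub
  haveI hSfintype := hSfin.fintype
  refine ⟨Fintype.card S, fun i => (((Fintype.equivFin S).symm i : S) : Set X), ?_, ?_, ?_, ?_, ?_, ?_⟩
  · -- compactness
    intro i
    obtain ⟨x, hxR, hEq⟩ := ((Fintype.equivFin S).symm i).2
    show IsCompact (((Fintype.equivFin S).symm i : S) : Set X)
    rw [← hEq]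
    exact (cls_closed F hF hF' hc hexp hε₁c hδ'pos hbr x).isCompact
  · -- invariance
    intro i
    obtain ⟨x, hxR, hEq⟩ := ((Fintype.equivFin S).symm i).2
    show (⇑F) '' (((Fintype.equivFin S).symm i : S) : Set X) = (((Fintype.equivFin S).symm i : S) : Set X)
    rw [← hEq]
    exact cls_inv F hF hF' x
  · -- disjointness
    intro i j hij
    rw [Set.disjoint_left]
    intro z hzi hzj
    apply hij
    obtain ⟨x, hxR, hEqi⟩ := ((Fintype.equivFin S).symm i).2
    obtain ⟨y, hyR, hEqj⟩ := ((Fintype.equivFin S).symm j).2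
    have hzi' : z ∈ cls F x := by rw [hEqi]; exact hzi
    have hzj' : z ∈ cls F y := by rw [hEqj]; exact hzj
    have hxy : cls F x = cls F y := cls_eq_of_inter F ⟨z, hzi', hzj'⟩
    have hvals : (((Fintype.equivFin S).symm i : S) : Set X)
        = (((Fintype.equivFin S).symm j : S) : Set X) := by
      rw [← hEqi, ← hEqj, hxy]
    have := Subtype.coe_injective hvals
    exact (Fintype.equivFin S).symm.injective this
  · -- the union is the chain recurrent set
    ext x
    simp only [Set.mem_setOf_eq, Set.mem_iUnion]
    constructor
    · intro hx
      have hmem : cls F x ∈ S := ⟨x, hx, rfl⟩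
      refine ⟨(Fintype.equivFin S) ⟨cls F x, hmem⟩, ?_⟩
      show x ∈ (((Fintype.equivFin S).symm ((Fintype.equivFin S) ⟨cls F x, hmem⟩) : S) : Set X)
      rw [Equiv.symm_apply_apply]
      exact ⟨hx, rel_refl F hx⟩
    · rintro ⟨i, hi⟩
      obtain ⟨y, hyR, hEq⟩ := ((Fintype.equivFin S).symm i).2
      have hi' : x ∈ cls F y := by rw [hEq]; exact hi
      exact hi'.1
  · -- transitivity on each component
    intro i
    obtain ⟨x, hxR, hEq⟩ := ((Fintype.equivFin S).symm i).2
    show TransitiveOnSet F (((Fintype.equivFin S).symm i : S) : Set X)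
    rw [← hEq]
    exact trans_on_cls F hF hF' hc hexp hε₀ hccs hδ'pos hδ'ε hbr x
  · -- Smale space structure on each component
    intro i
    obtain ⟨x, hxR, hEq⟩ := ((Fintype.equivFin S).symm i).2
    show IsSmaleOnSet F (((Fintype.equivFin S).symm i : S) : Set X)
    rw [← hEq]
    exact smale_on_cls F hF hF' hc hexp hε₀ hccs hδ'pos hδ'ε hbr x
end
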